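/- arXiv:2010.01130 — 2 statements merged into one kernel-verified Lean document; each statement's English description precedes it below -/
import Mathlib

section
/- Let k be a field of characteristic 2 and K a finitely generated field extension of k of transcendence degree 1 in which k is algebraically closed, with [K : k(K²)] = 2. Let f ∈ K \ k(K²) and let α, β, γ, δ ∈ k(K⁴) with αδ + βγ ≠ 0. If (αf + β)/(γf + δ) = f, then β = 0, γ = 0 and α = δ. (The fractional-linear action of Γ = PGL₂(k^{1/4}·K) on K \ k(K²) is free.) -/
open IntermediateField

/-- The subfield `k(K²)` of `K` generated by (the image of) `k` and all squares. -/
def kSq (k K : Type*) [Field k] [Field K] [Algebra k K] : IntermediateField k K :=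
  IntermediateField.adjoin k {x : K | ∃ y : K, x = y ^ 2}

/-- The subfield `k(K⁴)` of `K` generated by (the image of) `k` and all fourth
powers. -/
def kFour (k K : Type*) [Field k] [Field K] [Algebra k K] : IntermediateField k K :=
  IntermediateField.adjoin k {x : K | ∃ y : K, x = y ^ 4}

section Aux

open Polynomial Module Submodule Finset

variable {k K : Type*} [Field k] [Field K] [Algebra k K]

theorem pow_mem_adjoin_aux [CharP K 2] (n : ℕ) {S T : Set K}
    (h : ∀ s ∈ S, s ^ 2 ^ n ∈ adjoin k T) {x : K} (hx : x ∈ adjoin k S) :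
    x ^ 2 ^ n ∈ adjoin k T := by
  induction hx using IntermediateField.adjoin_induction with
  | mem s hs => exact h s hs
  | algebraMap a => rw [← map_pow]; exact (adjoin k T).algebraMap_mem _
  | add x y hx hy ihx ihy => rw [add_pow_expChar_pow]; exact add_mem ihx ihy
  | inv x hx ihx => rw [inv_pow]; exact inv_mem ihx
  | mul x y hx hy ihx ihy => rw [mul_pow]; exact mul_mem ihx ihy

theorem sq_mem_adjoin_aux [CharP K 2] {S T : Set K}
    (h : ∀ s ∈ S, s ^ 2 ∈ adjoin k T) {x : K} (hx : x ∈ adjoin k S) :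
    x ^ 2 ∈ adjoin k T := by
  have h' : ∀ s ∈ S, s ^ 2 ^ 1 ∈ adjoin k T := by simpa using h
  simpa using pow_mem_adjoin_aux 1 h' hx

theorem indep_powers_aux {t : K} (htrans : Transcendental k t) (N q : ℕ)
    (hq0 : 0 < q) (hn : 2 * N < q) (g : Fin N → adjoin k {t ^ q})
    (hg : ∑ j, (g j : K) * t ^ (2 * (j : ℕ)) = 0) (j0 : Fin N) : g j0 = 0 := by
  classical
  have hrep : ∀ j, ∃ P Q : k[X],
      aeval (t ^ q) Q ≠ 0 ∧ (g j : K) = aeval (t ^ q) P / aeval (t ^ q) Q := by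
    intro j
    obtain ⟨P, Q, h⟩ := (mem_adjoin_simple_iff k ((g j : K))).1 (g j).2
    by_cases hQ : aeval (t ^ q) Q = 0
    · exact ⟨0, 1, by simp, by simp [h, hQ]⟩
    · exact ⟨P, Q, hQ, h⟩
  choose P Q hQ hPQ using hrep
  have key : ∑ j, aeval (t ^ q) (P j * ∏ i ∈ Finset.univ.erase j, Q i) * t ^ (2 * (j : ℕ)) = 0 := by
    have hterm : ∀ j, aeval (t ^ q) (P j * ∏ i ∈ Finset.univ.erase j, Q i)
        = (g j : K) * aeval (t ^ q) (∏ i, Q i) := by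
      intro j
      rw [map_mul, map_prod, map_prod, hPQ j,
        ← Finset.mul_prod_erase Finset.univ (fun i => aeval (t ^ q) (Q i)) (Finset.mem_univ j),
        div_mul_eq_mul_div, mul_comm (aeval (t ^ q) (Q j)),
        mul_div_assoc, mul_div_cancel_right₀ _ (hQ j)]
    calc ∑ j, aeval (t ^ q) (P j * ∏ i ∈ Finset.univ.erase j, Q i) * t ^ (2 * (j : ℕ))
        = (∑ j, (g j : K) * t ^ (2 * (j : ℕ))) * aeval (t ^ q) (∏ i, Q i) := by
          rw [Finset.sum_mul]
          exact Finset.sum_congr rfl fun j _ => by rw [hterm j]; ring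
      _ = 0 := by rw [hg, zero_mul]
  set H : k[X] := ∑ j : Fin N,
    expand k q (P j * ∏ i ∈ Finset.univ.erase j, Q i) * X ^ (2 * (j : ℕ)) with hH
  have hHt : aeval t H = 0 := by
    rw [hH, map_sum]
    simp only [map_mul, expand_aeval, map_pow, aeval_X]
    have key' := key
    simp only [map_mul] at key'
    exact key'
  have hH0 : H = 0 := transcendental_iff.1 htrans H hHt
  have hG0 : P j0 * ∏ i ∈ Finset.univ.erase j0, Q i = 0 := by
    ext m
    rw [coeff_zero]
    have hco := congrArg (fun p : k[X] => p.coeff (q * m + 2 * (j0 : ℕ))) hH0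
    simp only [hH, finset_sum_coeff, coeff_zero] at hco
    rw [Finset.sum_eq_single j0] at hco
    · rw [coeff_mul_X_pow', if_pos (by omega : 2 * (j0 : ℕ) ≤ q * m + 2 * (j0 : ℕ)),
        (show q * m + 2 * (j0 : ℕ) - 2 * (j0 : ℕ) = q * m by omega),
        coeff_expand hq0, if_pos (dvd_mul_right q m), Nat.mul_div_cancel_left m hq0] at hco
      exact hco
    · intro j _ hj
      rw [coeff_mul_X_pow']
      split_ifs with hle
      · rw [coeff_expand hq0, if_neg ?_]
        · rintro ⟨u, hu⟩
          have heq : q * m + 2 * (j0 : ℕ) = q * u + 2 * (j : ℕ) :=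
            (Nat.sub_eq_iff_eq_add hle).1 hu
          have hj0N : (j0 : ℕ) < N := j0.isLt
          have hjN : (j : ℕ) < N := j.isLt
          have h1 : (q * m + 2 * (j0 : ℕ)) % q = 2 * (j0 : ℕ) := by
            rw [Nat.mul_add_mod]; exact Nat.mod_eq_of_lt (by omega)
          have h2 : (q * u + 2 * (j : ℕ)) % q = 2 * (j : ℕ) := by
            rw [Nat.mul_add_mod]; exact Nat.mod_eq_of_lt (by omega)
          have hjj : (j : ℕ) = (j0 : ℕ) := by
            have := h1 ▸ h2 ▸ congrArg (· % q) heq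
            omega
          exact hj (Fin.ext hjj)
      · rfl
    · intro h; exact absurd (Finset.mem_univ j0) h
  have hP0 : P j0 = 0 := by
    rcases mul_eq_zero.1 hG0 with h | h
    · exact h
    · exfalso
      have hne : aeval (t ^ q) (∏ i ∈ Finset.univ.erase j0, Q i) ≠ 0 := by
        rw [map_prod]
        exact Finset.prod_ne_zero_iff.2 fun i _ => hQ i
      rw [h, map_zero] at hne
      exact hne rfl
  exact Subtype.ext (by rw [hPQ j0, hP0, map_zero, zero_div, ZeroMemClass.coe_zero])

set_option maxHeartbeats 1000000 in
set_option synthInstance.maxHeartbeats 200000 in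
theorem sq_not_mem_kFour [CharP K 2]
    (hfg : (⊤ : IntermediateField k K).FG)
    (htr : ∃ x : K, Transcendental k x ∧
      Algebra.IsAlgebraic (IntermediateField.adjoin k {x}) K)
    (hdeg : Module.finrank (kSq k K) K = 2)
    {f : K} (hf : f ∉ kSq k K) (h4 : f ^ 2 ∈ kFour k K) : False := by
  classical
  -- k(K⁴) ⊆ k(K²)
  have hFS : kFour k K ≤ kSq k K := by
    rw [kFour, adjoin_le_iff]
    rintro x ⟨y, rfl⟩
    exact subset_adjoin k _ ⟨y ^ 2, by ring⟩
  -- squares of k(K²) lie in k(K⁴)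
  have hsq2 : ∀ x : K, x ∈ kSq k K → x ^ 2 ∈ kFour k K := by
    intro x hx
    refine sq_mem_adjoin_aux ?_ hx
    rintro s ⟨y, rfl⟩
    exact subset_adjoin k _ ⟨y, by ring⟩
  -- every element of K is a·f + b with a, b ∈ k(K²)
  have hind : LinearIndependent (kSq k K) ![f, 1] := by
    refine linearIndependent_fin2.2 ⟨one_ne_zero, fun a ha => hf ?_⟩
    simp only [Matrix.cons_val_one, Matrix.head_cons, Matrix.cons_val_zero] at ha
    have h1 : a • (1 : K) = (a : K) := by
      rw [Algebra.smul_def, mul_one]; rfl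
    rw [h1] at ha
    exact ha ▸ a.2
  have hspan := hind.span_eq_top_of_card_eq_finrank
    (by simpa using hdeg.symm)
  have hrep : ∀ x : K, ∃ a b : kSq k K, x = (a : K) * f + (b : K) := by
    intro x
    have hx : x ∈ Submodule.span (kSq k K) {f, 1} := by
      have : Set.range ![f, (1 : K)] = {f, 1} := by
        ext z
        simp [Fin.exists_fin_two, or_comm]
      rw [← this, hspan]; trivial
    obtain ⟨a, b, hab⟩ := Submodule.mem_span_pair.1 hx
    refine ⟨a, b, ?_⟩
    have ha : a • f = (a : K) * f := by rw [Algebra.smul_def]; rfl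
    have hb : b • (1 : K) = (b : K) := by rw [Algebra.smul_def, mul_one]; rfl
    rw [← hab, ha, hb]
  -- hence k(K²) = k(K⁴)
  have hKsqF : kSq k K = kFour k K := by
    refine le_antisymm ?_ hFS
    rw [kSq, adjoin_le_iff]
    rintro x ⟨y, rfl⟩
    obtain ⟨a, b, rfl⟩ := hrep y
    have hexp : ((a : K) * f + (b : K)) ^ 2 = (a : K) ^ 2 * f ^ 2 + (b : K) ^ 2 := by
      rw [add_pow_expChar, mul_pow]
    rw [hexp]
    exact add_mem (mul_mem (hsq2 _ a.2) h4) (hsq2 _ b.2)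
  -- the tower of fields A m = k(K^{2^m})
  set A : ℕ → IntermediateField k K :=
    fun m => adjoin k {x : K | ∃ y : K, x = y ^ 2 ^ m} with hA
  have hA1 : kSq k K = A 1 := by
    rw [hA, kSq]
    norm_num
  have hstep : ∀ m, ∀ x ∈ A m, x ^ 2 ∈ A (m + 1) := by
    intro m x hx
    refine sq_mem_adjoin_aux ?_ hx
    rintro s ⟨y, rfl⟩
    refine subset_adjoin k _ ⟨y, ?_⟩
    rw [← pow_mul, pow_succ]
  have hles : ∀ m, kSq k K ≤ A (m + 1) := by
    intro m
    induction m with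
    | zero => exact hA1.le
    | succ m ih =>
        rw [hKsqF, kFour, adjoin_le_iff]
        rintro x ⟨y, rfl⟩
        have h2 : y ^ 2 ∈ A (m + 1) := ih (subset_adjoin k _ ⟨y, rfl⟩)
        have h3 := hstep (m + 1) _ h2
        rwa [show (y ^ 2) ^ 2 = y ^ 4 by ring] at h3
  -- transcendental element and finiteness
  obtain ⟨t, htrans, halgk⟩ := htr
  haveI : FiniteDimensional (adjoin k {t}) K := by
    obtain ⟨S, hS⟩ := hfg
    have htop : adjoin (adjoin k {t}) (↑S : Set K) = ⊤ := by
      rw [eq_top_iff]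
      intro x _
      have hx : x ∈ adjoin k (↑S : Set K) := by rw [hS]; trivial
      have hle : adjoin k (↑S : Set K) ≤
          (adjoin (adjoin k {t}) (↑S : Set K)).restrictScalars k := by
        rw [adjoin_le_iff]
        intro s hs
        exact subset_adjoin (adjoin k {t}) (↑S : Set K) hs
      exact hle hx
    have hfd : FiniteDimensional (adjoin k {t}) (adjoin (adjoin k {t}) (↑S : Set K)) :=
      finiteDimensional_adjoin fun x _ => (halgk.isAlgebraic x).isIntegral
    rw [htop] at hfd
    exact (IntermediateField.topEquiv (F := adjoin k {t}) (E := K)).toLinearEquiv.finiteDimensional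
  set d := Module.finrank (adjoin k {t}) K with hd
  set n := 2 * d + 2 with hn
  have hq : 2 * (d + 1) < 2 ^ n := by
    calc 2 * (d + 1) = 2 * d + 2 := by ring
      _ < 2 ^ (2 * d + 2) := Nat.lt_two_pow_self
  have hq0 : 0 < 2 ^ n := pow_pos (by norm_num) n
  set q := 2 ^ n with hqdef
  -- the basis of K over k(t)
  set e : Basis (Fin d) (adjoin k {t}) K := Module.finBasis (adjoin k {t}) K with he
  -- coefficients raised to the q-th power
  have hcF : ∀ c : adjoin k {t}, (c : K) ^ q ∈ adjoin k {t ^ q} := by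
    intro c
    refine pow_mem_adjoin_aux n ?_ c.2
    rintro s hs
    rw [Set.mem_singleton_iff] at hs
    subst hs
    exact subset_adjoin k _ rfl
  set Fn : IntermediateField k K := adjoin k {t ^ q} with hFn
  set M : Submodule Fn K := Submodule.span Fn (Set.range fun i => e i ^ q) with hM
  have hpowM : ∀ x : K, x ^ q ∈ M := by
    intro x
    have hxq : x ^ q = ∑ i, ((e.repr x i : K)) ^ q * e i ^ q := by
      conv_lhs => rw [← Basis.sum_repr e x]
      rw [hqdef, ← iterateFrobenius_def (R := K) (p := 2) (n := n), map_sum]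
      refine Finset.sum_congr rfl fun i _ => ?_
      rw [iterateFrobenius_def, Algebra.smul_def, mul_pow]
      rfl
    rw [hxq]
    refine Submodule.sum_mem _ fun i _ => ?_
    have hz : e i ^ q ∈ M := Submodule.subset_span ⟨i, rfl⟩
    have := Submodule.smul_mem M (⟨(e.repr x i : K) ^ q, hcF _⟩ : Fn) hz
    have hsmul : (⟨(e.repr x i : K) ^ q, hcF _⟩ : Fn) • (e i ^ q)
        = (e.repr x i : K) ^ q * e i ^ q := by
      rw [Algebra.smul_def]; rfl
    rwa [hsmul] at this
  have h1M : (1 : K) ∈ M := by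
    have := hpowM 1
    rwa [one_pow] at this
  have hmulM : ∀ x y : K, x ∈ M → y ∈ M → x * y ∈ M := by
    intro x y hx hy
    have hMM : M * M ≤ M := by
      rw [hM, Submodule.span_mul_span]
      refine Submodule.span_le.2 ?_
      rintro z hz
      obtain ⟨a, ⟨i, rfl⟩, b, ⟨j, rfl⟩, rfl⟩ := hz
      have hmm : (e i * e j) ^ q ∈ M := hpowM _
      simpa [mul_pow] using hmm
    exact hMM (Submodule.mul_mem_mul hx hy)
  set MA : Subalgebra Fn K := M.toSubalgebra h1M hmulM with hMA
  have hMfg : (Subalgebra.toSubmodule MA).FG := by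
    rw [hMA, Submodule.toSubalgebra_toSubmodule]
    exact Submodule.fg_span (Set.finite_range _)
  have hint : ∀ x : K, x ∈ MA → IsIntegral Fn x :=
    fun x hx => IsIntegral.of_mem_of_fg MA hMfg x hx
  set MF : IntermediateField Fn K := MA.toIntermediateField
    (fun x hx => MA.inv_mem_of_algebraic (x := ⟨x, hx⟩) ((hint x hx).isAlgebraic)) with hMF
  have hmemMF : ∀ x : K, x ∈ MF ↔ x ∈ M := fun x => Iff.rfl
  -- A n is contained in MF
  have hAn : A n ≤ MF.restrictScalars k := by
    rw [hA, adjoin_le_iff]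
    rintro x ⟨y, rfl⟩
    show y ^ 2 ^ n ∈ MF
    rw [hmemMF, ← hqdef]
    exact hpowM y
  -- so t² and all its powers lie in M
  have ht2 : t ^ 2 ∈ kSq k K := subset_adjoin k _ ⟨t, rfl⟩
  have htM : ∀ j : ℕ, t ^ (2 * j) ∈ M := by
    intro j
    have h1 : t ^ 2 ∈ MF.restrictScalars k := by
      have hn1 : n = (n - 1) + 1 := by omega
      exact hAn (hn1 ▸ hles (n - 1) ht2)
    have h2 : (t ^ 2) ^ j ∈ MF.restrictScalars k := pow_mem h1 j
    rw [← pow_mul] at h2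
    exact h2
  -- linear independence of 1, t², t⁴, …, t^{2d} over Fn
  have hli : LinearIndependent Fn (fun j : Fin (d + 1) => (⟨t ^ (2 * (j : ℕ)), htM j⟩ : M)) := by
    rw [Fintype.linearIndependent_iff]
    intro g hg
    have hg' : ∑ j, (g j : K) * t ^ (2 * (j : ℕ)) = 0 := by
      have := congrArg (M.subtype) hg
      rw [map_sum] at this
      simpa [Algebra.smul_def] using this
    intro j
    exact indep_powers_aux htrans (d + 1) q hq0 (by omega) g hg' j
  haveI : Module.Finite Fn M := FiniteDimensional.span_of_finite Fn (Set.finite_range _)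
  have hcard : d + 1 ≤ Module.finrank Fn M := by
    simpa using hli.fintype_card_le_finrank
  have hrank : Module.finrank Fn M ≤ d := by
    have := finrank_range_le_card (R := Fn) (fun i : Fin d => e i ^ q)
    rw [Set.finrank] at this
    simpa [hM] using this
  omega

end Aux

/-- **Freeness of the `PGL₂(k^{1/4}·K)`-action** (cf. Definition 4.1 of
Kedlaya–Litt–Witaszek): let `k` be a field of characteristic `2` and `K` a finitely
generated field extension of transcendence degree `1` in which `k` is algebraically
closed, with `[K : k(K²)] = 2`.  If `f ∈ K \ k(K²)`, `α, β, γ, δ ∈ k(K⁴)` satisfy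
`αδ + βγ ≠ 0` and `(αf + β)/(γf + δ) = f`, then `β = 0`, `γ = 0` and `α = δ`. -/
theorem pgl2_action_free
    (k K : Type*) [Field k] [CharP k 2] [Field K] [Algebra k K]
    (hfg : (⊤ : IntermediateField k K).FG)
    (htr : ∃ x : K, Transcendental k x ∧
      Algebra.IsAlgebraic (IntermediateField.adjoin k {x}) K)
    (halg : ∀ x : K, IsAlgebraic k x → x ∈ (algebraMap k K).range)
    (hdeg : Module.finrank (kSq k K) K = 2)
    (f : K) (hf : f ∉ kSq k K)
    (α β γ δ : K) (hα : α ∈ kFour k K) (hβ : β ∈ kFour k K)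
    (hγ : γ ∈ kFour k K) (hδ : δ ∈ kFour k K)
    (hdet : α * δ + β * γ ≠ 0)
    (hfix : (α * f + β) / (γ * f + δ) = f) :
    β = 0 ∧ γ = 0 ∧ α = δ := by
  haveI : CharP K 2 := charP_of_injective_algebraMap (algebraMap k K).injective 2
  have h2 : (2 : K) = 0 := by exact_mod_cast CharP.cast_eq_zero K 2
  have hFS : kFour k K ≤ kSq k K := by
    rw [kFour, adjoin_le_iff]
    rintro x ⟨y, rfl⟩
    exact subset_adjoin k _ ⟨y ^ 2, by ring⟩
  have hf2 : f ^ 2 ∈ kSq k K := subset_adjoin k _ ⟨f, rfl⟩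
  have hf0 : f ≠ 0 := fun h => hf (h ▸ (kSq k K).zero_mem)
  have hden : γ * f + δ ≠ 0 := by
    intro h
    rw [h, div_zero] at hfix
    exact hf0 hfix.symm
  rw [div_eq_iff hden] at hfix
  have heq : γ * f ^ 2 + (α + δ) * f + β = 0 := by
    linear_combination hfix + (γ * f ^ 2 + δ * f) * h2
  have had : α + δ = 0 := by
    by_contra h
    apply hf
    have hfe : f = (γ * f ^ 2 + β) / (α + δ) := by
      rw [eq_div_iff h]
      linear_combination heq - (γ * f ^ 2 + β) * h2
    rw [hfe]
    exact div_mem (add_mem (mul_mem (hFS hγ) hf2) (hFS hβ)) (hFS (add_mem hα hδ))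
  have hgb : γ * f ^ 2 + β = 0 := by linear_combination heq - f * had
  have hαδ : α = δ := by linear_combination had - δ * h2
  by_cases hγ0 : γ = 0
  · refine ⟨?_, hγ0, hαδ⟩
    linear_combination hgb - f ^ 2 * hγ0
  · exfalso
    have hffour : f ^ 2 ∈ kFour k K := by
      have hf2e : f ^ 2 = β / γ := by
        rw [eq_div_iff hγ0]
        linear_combination hgb - β * h2
      rw [hf2e]
      exact div_mem hβ hγ
    exact sq_not_mem_kFour hfg htr hdeg hf hffour
end

section
/- With k, K, R, ι, M and the Sugiyama–Yasuda symbol SY as in the context: for all f, g ∈ R and all α, β, γ, δ ∈ k(K⁴) with αδ + βγ ≠ 0, setting g' := (αg + β)/(γg + δ), one has g' ∈ R and SY(f, g') = SY(f, g) in Ω_{K/k}. (The Sugiyama–Yasuda symbol is invariant under the action of Γ = PGL₂(k^{1/4}·K) on its second argument.) -/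
open IntermediateField

/-- `SYWitness k K ι f g s` records that `s ∈ K` computes the Sugiyama–Yasuda symbol
`SY(f, g) = s • dg`: writing (inside a perfect closure `L` of `K`, via the embedding
`ι : K → L`) `f = f₀⁴ + f₁⁴ g + f₂⁴ g² + f₃⁴ g³` with `f₀, f₁, f₂, f₃` in the subfield
`M = k^{1/4}·K = {x : L | x⁴ ∈ ι(k(K⁴))}`, one has
`s = ((f₁f₃ + f₂²)/(f₁² + f₃² g))²`.  (The decomposition, and hence `s`, exists and is
unique; here it is recorded as a predicate.) -/
def SYWitness (k K L : Type*) [Field k] [Field K] [Algebra k K] [Field L]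
    (ι : K →+* L) (f g s : K) : Prop :=
  ∃ f0 f1 f2 f3 : L,
    f0 ^ 4 ∈ ι '' (kFour k K : Set K) ∧ f1 ^ 4 ∈ ι '' (kFour k K : Set K) ∧
    f2 ^ 4 ∈ ι '' (kFour k K : Set K) ∧ f3 ^ 4 ∈ ι '' (kFour k K : Set K) ∧
    ι f = f0 ^ 4 + f1 ^ 4 * ι g + f2 ^ 4 * (ι g) ^ 2 + f3 ^ 4 * (ι g) ^ 3 ∧
    f1 ^ 2 + f3 ^ 2 * ι g ≠ 0 ∧
    ι s = ((f1 * f3 + f2 ^ 2) / (f1 ^ 2 + f3 ^ 2 * ι g)) ^ 2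

section SYaux

lemma SY_sq_inj {F : Type*} [Field F] (h2 : (2:F) = 0) {x y : F} (h : x^2 = y^2) : x = y := by
  have h3 : (x - y)^2 = 0 := by linear_combination h + (y^2 - x*y) * h2
  exact sub_eq_zero.mp (pow_eq_zero_iff (two_ne_zero (α := ℕ)) |>.mp h3)

lemma SY_pow4_inj {F : Type*} [Field F] (h2 : (2:F) = 0) {x y : F} (h : x^4 = y^4) : x = y := by
  apply SY_sq_inj h2; apply SY_sq_inj h2; linear_combination h

lemma SY_add_sq {R : Type*} [CommRing R] (h2 : (2:R) = 0) (x y : R) : (x+y)^2 = x^2 + y^2 := by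
  linear_combination x*y*h2

lemma SY_sum_sq {R : Type*} [CommRing R] (h2 : (2:R) = 0) {ι : Type*} (s : Finset ι) (w : ι → R) :
    (∑ j ∈ s, w j)^2 = ∑ j ∈ s, (w j)^2 := by
  classical
  induction s using Finset.induction_on with
  | empty => simp
  | insert _ _ hx ih =>
      rw [Finset.sum_insert hx, Finset.sum_insert hx, SY_add_sq h2, ih]

variable {k K : Type*} [Field k] [Field K] [Algebra k K]

lemma SY_two_eq_zero [CharP k 2] : (2:K) = 0 := by
  have h : (2:k) = 0 := by
    have := CharP.cast_eq_zero k 2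
    exact_mod_cast this
  calc (2:K) = algebraMap k K (2:k) := by rw [map_ofNat]
  _ = 0 := by rw [h, map_zero]

lemma SY_sq_mem_kSq (y : K) : y^2 ∈ kSq k K :=
  IntermediateField.subset_adjoin _ _ ⟨y, rfl⟩

lemma SY_pow4_mem_kFour (y : K) : y^4 ∈ kFour k K :=
  IntermediateField.subset_adjoin _ _ ⟨y, rfl⟩

lemma SY_kFour_le_kSq : kFour k K ≤ kSq k K := by
  rw [kFour, IntermediateField.adjoin_le_iff]
  rintro x ⟨y, rfl⟩
  exact (show (y:K)^4 = (y^2)^2 by ring) ▸ SY_sq_mem_kSq (y^2)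

/-- In char 2, squares of elements of `k(K²)` lie in `k(K⁴)`. -/
lemma SY_sq_mem_kFour (h2 : (2:K) = 0) {u : K} (hu : u ∈ kSq k K) : u^2 ∈ kFour k K := by
  induction hu using IntermediateField.adjoin_induction with
  | mem x hx =>
      obtain ⟨y, rfl⟩ := hx
      exact (show (y^2)^2 = y^4 by ring) ▸ SY_pow4_mem_kFour y
  | algebraMap x => exact (map_pow (algebraMap k K) x 2) ▸ (kFour k K).algebraMap_mem (x^2)
  | add x y hx hy ihx ihy => rw [SY_add_sq h2]; exact add_mem ihx ihy
  | inv x hx ihx => rw [inv_pow]; exact inv_mem ihx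
  | mul x y hx hy ihx ihy => rw [mul_pow]; exact mul_mem ihx ihy

/-- In char 2, fourth powers of elements of `k(t)` lie in `k(t⁴)`. -/
lemma SY_pow4_adjoin (h2 : (2:K) = 0) (t : K) {c : K}
    (hc : c ∈ IntermediateField.adjoin k {t}) :
    c^4 ∈ IntermediateField.adjoin k ({t^4} : Set K) := by
  induction hc using IntermediateField.adjoin_induction with
  | mem x hx =>
      rcases Set.mem_singleton_iff.mp hx with rfl
      exact IntermediateField.subset_adjoin _ _ rfl
  | algebraMap x => exact (map_pow (algebraMap k K) x 4) ▸
      (IntermediateField.adjoin k ({t^4} : Set K)).algebraMap_mem (x^4)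
  | add x y hx hy ihx ihy =>
      have : (x+y)^4 = x^4 + y^4 := by
        rw [show (x+y)^4 = ((x+y)^2)^2 by ring, SY_add_sq h2, SY_add_sq h2]; ring
      rw [this]; exact add_mem ihx ihy
  | inv x hx ihx => rw [inv_pow]; exact inv_mem ihx
  | mul x y hx hy ihx ihy => rw [mul_pow]; exact mul_mem ihx ihy

lemma SY_pair_indep {E : IntermediateField k K} {x u v : K} (hx : x ∉ E)
    (hu : u ∈ E) (hv : v ∈ E) (h : u + v * x = 0) : u = 0 ∧ v = 0 := by
  by_cases hv0 : v = 0
  · subst hv0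
    refine ⟨?_, rfl⟩
    linear_combination h
  · exfalso
    apply hx
    have hxe : x = (-u) / v := by
      field_simp
      linear_combination h
    rw [hxe]
    exact div_mem (neg_mem hu) hv

lemma SY_not_mem_adjoin_sq {s : K} (hs : Transcendental k s) :
    s ∉ IntermediateField.adjoin k ({s^2} : Set K) := by
  intro hmem
  rw [show (IntermediateField.adjoin k ({s^2} : Set K)) = k⟮s^2⟯ from rfl,
    IntermediateField.mem_adjoin_simple_iff] at hmem
  obtain ⟨p, q, hpq⟩ := hmem
  have hQ0 : Polynomial.aeval (s^2) q ≠ 0 := by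
    intro h0
    rw [h0, div_zero] at hpq
    exact hs (hpq ▸ isAlgebraic_zero)
  have key : Polynomial.aeval s (Polynomial.expand k 2 p - Polynomial.X * Polynomial.expand k 2 q) = 0 := by
    rw [map_sub, map_mul, Polynomial.aeval_X, Polynomial.expand_aeval, Polynomial.expand_aeval]
    rw [eq_div_iff hQ0] at hpq
    linear_combination -hpq
  have hpoly : Polynomial.expand k 2 p - Polynomial.X * Polynomial.expand k 2 q = 0 := by
    by_contra hne
    exact hs ⟨_, hne, key⟩
  have hq0 : q = 0 := by
    ext n
    have := congrArg (fun r => Polynomial.coeff r (2*n+1)) hpoly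
    simp only [Polynomial.coeff_sub, Polynomial.coeff_zero] at this
    rw [Polynomial.coeff_expand (by norm_num), Polynomial.coeff_X_mul,
      Polynomial.coeff_expand (by norm_num)] at this
    have h1 : ¬ (2 ∣ 2*n+1) := by omega
    have h2 : 2 ∣ 2*n := ⟨n, rfl⟩
    simp only [h1, if_false, h2, if_true] at this
    have h3 : 2*n/2 = n := by omega
    rw [h3] at this
    simpa using this.symm
  exact hQ0 (by rw [hq0, map_zero])

end SYaux

section SYaux2

open IntermediateField

variable {k K : Type*} [Field k] [Field K] [Algebra k K]

lemma SY_indep_four {t : K} (ht : Transcendental k t) {c0 c1 c2 c3 : K}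
    (h0 : c0 ∈ IntermediateField.adjoin k ({t^4} : Set K))
    (h1 : c1 ∈ IntermediateField.adjoin k ({t^4} : Set K))
    (h2 : c2 ∈ IntermediateField.adjoin k ({t^4} : Set K))
    (h3 : c3 ∈ IntermediateField.adjoin k ({t^4} : Set K))
    (hsum : c0 + c1*t + c2*t^2 + c3*t^3 = 0) :
    c0 = 0 ∧ c1 = 0 ∧ c2 = 0 ∧ c3 = 0 := by
  have hset : ({t^4} : Set K) = {(t^2)^2} := by rw [show (t:K)^4 = (t^2)^2 from by ring]
  have h42 : IntermediateField.adjoin k ({t^4} : Set K) ≤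
      IntermediateField.adjoin k ({t^2} : Set K) := by
    rw [IntermediateField.adjoin_le_iff]
    rintro w hw
    rcases hw with rfl
    exact (show (t:K)^4 = (t^2)^2 from by ring) ▸
      pow_mem (IntermediateField.subset_adjoin k {t^2} rfl) 2
  have ht2 : t^2 ∈ IntermediateField.adjoin k ({t^2} : Set K) :=
    IntermediateField.subset_adjoin k {t^2} rfl
  obtain ⟨A, B⟩ := SY_pair_indep (SY_not_mem_adjoin_sq ht)
    (add_mem (h42 h0) (mul_mem (h42 h2) ht2))
    (add_mem (h42 h1) (mul_mem (h42 h3) ht2))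
    (by linear_combination hsum)
  rw [hset] at h0 h1 h2 h3
  obtain ⟨A0, A2⟩ := SY_pair_indep (SY_not_mem_adjoin_sq (ht.pow (by norm_num))) h0 h2 A
  obtain ⟨A1, A3⟩ := SY_pair_indep (SY_not_mem_adjoin_sq (ht.pow (by norm_num))) h1 h3 B
  exact ⟨A0, A1, A2, A3⟩

lemma SY_exists_rep (hdeg : Module.finrank (kSq k K) K = 2) {x : K} (hx : x ∉ kSq k K)
    (z : K) : ∃ u v : K, u ∈ kSq k K ∧ v ∈ kSq k K ∧ z = u + v * x := by
  haveI : FiniteDimensional (kSq k K) K :=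
    Module.finite_of_finrank_pos (by rw [hdeg]; norm_num)
  have li : LinearIndependent (kSq k K) ![(1:K), x] := by
    rw [LinearIndependent.pair_iff]
    intro s t hst
    have hst' : (s:K) + (t:K) * x = 0 := by
      simpa [Algebra.smul_def] using hst
    obtain ⟨hs, ht⟩ := SY_pair_indep hx s.2 t.2 hst'
    exact ⟨ZeroMemClass.coe_eq_zero.mp hs, ZeroMemClass.coe_eq_zero.mp ht⟩
  have hsp := li.span_eq_top_of_card_eq_finrank (by simp [hdeg])
  have hz : z ∈ Submodule.span (kSq k K) (Set.range ![(1:K), x]) := by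
    rw [hsp]; trivial
  have hrange : Set.range ![(1:K), x] = {(1:K), x} := by
    simp [Matrix.range_cons, Matrix.range_empty]
    exact Set.pair_comm x 1
  rw [hrange] at hz
  obtain ⟨a, b, hab⟩ := Submodule.mem_span_pair.mp hz
  refine ⟨a, b, a.2, b.2, ?_⟩
  rw [← hab]
  simp [Algebra.smul_def, IntermediateField.algebraMap_apply]

lemma SY_fd_of_fg_algebraic (hfg : (⊤ : IntermediateField k K).FG)
    (E : IntermediateField k K) (halgE : Algebra.IsAlgebraic E K) :
    FiniteDimensional E K := by
  obtain ⟨S, hS⟩ := hfg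
  haveI : FiniteDimensional E (IntermediateField.adjoin E (↑S : Set K)) :=
    IntermediateField.finiteDimensional_adjoin
      (fun x _ => ((halgE.isAlgebraic x).isIntegral))
  have htop : IntermediateField.adjoin E (↑S : Set K) = ⊤ := by
    apply IntermediateField.restrictScalars_injective k
    rw [IntermediateField.restrictScalars_top]
    exact top_unique (hS ▸ (IntermediateField.adjoin_le_iff.mpr
      (fun w hw => IntermediateField.subset_adjoin E _ hw)))
  rw [htop] at this
  exact (IntermediateField.topEquiv (F := E) (E := K)).toLinearEquiv.finiteDimensional

set_option maxHeartbeats 1000000 in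
set_option synthInstance.maxHeartbeats 400000 in
lemma SY_rank_contradiction (h2 : (2:K) = 0) (E F : IntermediateField k K)
    [FiniteDimensional E K] (t : K) (htE : t ∈ E) (hFE : F ≤ E)
    (hpow4 : ∀ c : K, c ∈ E → c^4 ∈ F)
    (hindep : ∀ c0 c1 c2 c3 : K, c0 ∈ F → c1 ∈ F → c2 ∈ F → c3 ∈ F →
      c0 + c1*t + c2*t^2 + c3*t^3 = 0 → c0 = 0 ∧ c1 = 0 ∧ c2 = 0 ∧ c3 = 0)
    (hdeg : Module.finrank (kSq k K) K = 2)
    (hEq : kSq k K = kFour k K) : False := by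
  classical
  set m := Module.finrank E K with hm
  have hm1 : 1 ≤ m := Module.finrank_pos
  set eb : Module.Basis (Fin m) E K := Module.finBasis E K with heb
  -- x outside kSq
  have hxex : ∃ x : K, x ∉ kSq k K := by
    by_contra hc
    push_neg at hc
    have htop2 : kSq k K = ⊤ := le_antisymm le_top (fun w _ => hc w)
    rw [htop2, IntermediateField.finrank_top] at hdeg
    norm_num at hdeg
  obtain ⟨x, hx⟩ := hxex
  -- span of fourth powers
  set V : Submodule F K := Submodule.span F (Set.range (fun y : K => y^4)) with hV
  have h1V : ∀ y : K, y^4 ∈ V := fun y => Submodule.subset_span ⟨y, rfl⟩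
  have hVle : V ≤ Submodule.span F (Set.range (fun j : Fin m => (eb j)^4)) := by
    rw [hV, Submodule.span_le]
    rintro w ⟨y, rfl⟩
    show y^4 ∈ _
    have h4 : y^4 = ∑ j, ((eb.repr y j : K) * eb j)^4 := by
      calc y^4 = ((∑ j, eb.repr y j • eb j)^2)^2 := by rw [eb.sum_repr y]; ring
      _ = ((∑ j, (eb.repr y j • eb j)^2))^2 := by rw [SY_sum_sq h2]
      _ = ∑ j, ((eb.repr y j • eb j)^2)^2 := SY_sum_sq h2 _ _
      _ = ∑ j, ((eb.repr y j : K) * eb j)^4 := by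
          refine Finset.sum_congr rfl (fun j _ => ?_)
          rw [Algebra.smul_def, IntermediateField.algebraMap_apply]
          ring
    rw [h4]
    refine Submodule.sum_mem _ (fun j _ => ?_)
    have hc4 : ((eb.repr y j : K))^4 ∈ F := hpow4 _ (eb.repr y j).2
    have hterm : ((eb.repr y j : K) * eb j)^4 = (⟨_, hc4⟩ : F) • (eb j)^4 := by
      rw [Algebra.smul_def, IntermediateField.algebraMap_apply]
      show _ = ((eb.repr y j : K))^4 * _
      ring
    rw [hterm]
    exact Submodule.smul_mem _ _ (Submodule.subset_span ⟨j, rfl⟩)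
  haveI : FiniteDimensional F
      ↥(Submodule.span F (Set.range (fun j : Fin m => (eb j)^4))) :=
    FiniteDimensional.span_of_finite F (Set.finite_range _)
  haveI hVfd : FiniteDimensional F ↥V := Submodule.finiteDimensional_of_le hVle
  have hVrank : Module.finrank F ↥V ≤ m := by
    refine le_trans (Submodule.finrank_mono hVle) ?_
    refine le_trans (finrank_span_le_card _) ?_
    rw [Set.toFinset_range]
    exact le_trans (Finset.card_image_le) (by simp)
  -- V as a subalgebra
  have hmulV : ∀ (u w : K), u ∈ V → w ∈ V → u * w ∈ V := by
    intro u w hu hw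
    have hVV : V * V ≤ V := by
      rw [hV, Submodule.span_mul_span, Submodule.span_le]
      rintro z ⟨z1, ⟨y1, rfl⟩, z2, ⟨y2, rfl⟩, rfl⟩
      have : (y1:K)^4 * y2^4 = (y1*y2)^4 := by ring
      show (y1:K)^4 * y2^4 ∈ _
      rw [this]
      exact Submodule.subset_span ⟨y1*y2, rfl⟩
    exact hVV (Submodule.mul_mem_mul hu hw)
  set A : Subalgebra F K := V.toSubalgebra (by simpa using h1V 1) hmulV with hA
  haveI hAfd : Module.Finite F A := hVfd
  have hVinv : ∀ y, y ∈ V → y⁻¹ ∈ V := by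
    intro y hy
    have hyA : y ∈ A := hy
    have hint : IsIntegral F (⟨y, hyA⟩ : A) := IsIntegral.of_finite F _
    have halgy : IsAlgebraic F ((⟨y, hyA⟩ : A) : K) := (hint.map (A.val)).isAlgebraic
    exact A.inv_mem_of_algebraic halgy
  set W : IntermediateField k K :=
    { toSubalgebra := A.restrictScalars k
      inv_mem' := fun y hy => hVinv y hy } with hW
  have hsub : kSq k K ≤ W := by
    rw [hEq, kFour, IntermediateField.adjoin_le_iff]
    rintro w ⟨y, rfl⟩
    exact h1V y
  -- spanning K
  set Vx : Submodule F K := Submodule.map (LinearMap.mulRight F x) V with hVx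
  have hUtop : V ⊔ Vx = ⊤ := by
    rw [eq_top_iff]
    intro z _
    obtain ⟨u, v, hu, hv, rfl⟩ := SY_exists_rep hdeg hx z
    have huV : u ∈ V := hsub hu
    have hvV : v ∈ V := hsub hv
    exact Submodule.add_mem_sup huV (Submodule.mem_map_of_mem hvV)
  haveI hVxfd : FiniteDimensional F ↥Vx := Module.Finite.map V (LinearMap.mulRight F x)
  haveI hKfd : FiniteDimensional F K := by
    have hfdsup : FiniteDimensional F ↥(V ⊔ Vx) := Submodule.finiteDimensional_sup V Vx
    rw [hUtop] at hfdsup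
    exact (Submodule.topEquiv (R := F) (M := K)).finiteDimensional
  have hup : Module.finrank F K ≤ m + m := by
    calc Module.finrank F K = Module.finrank F ↥(⊤ : Submodule F K) := (finrank_top (↥F) K).symm
    _ = Module.finrank F ↥(V ⊔ Vx) := by rw [hUtop]
    _ ≤ Module.finrank F ↥V + Module.finrank F ↥Vx :=
        Submodule.finrank_add_le_finrank_add_finrank V Vx
    _ ≤ m + m := add_le_add hVrank (le_trans (Submodule.finrank_map_le _ _) hVrank)
  -- lower bound 4m
  have hli : LinearIndependent F (fun p : Fin 4 × Fin m => t^(p.1 : ℕ) * eb p.2) := by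
    rw [Fintype.linearIndependent_iff]
    intro cf hcf
    set d : Fin m → E := fun j => ⟨∑ i : Fin 4, (cf (i,j) : K) * t^(i:ℕ),
      sum_mem (fun i _ => mul_mem (hFE (cf (i,j)).2) (pow_mem htE (i:ℕ)))⟩ with hd
    have key : ∑ j, d j • eb j = 0 := by
      calc ∑ j, d j • eb j = ∑ j, ∑ i : Fin 4, (cf (i,j) : K) * t^(i:ℕ) * eb j := by
            refine Finset.sum_congr rfl fun j _ => ?_
            rw [Algebra.smul_def, IntermediateField.algebraMap_apply]
            show (∑ i : Fin 4, (cf (i,j):K) * t^(i:ℕ)) * eb j = _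
            rw [Finset.sum_mul]
      _ = ∑ i : Fin 4, ∑ j, (cf (i,j) : K) * t^(i:ℕ) * eb j := Finset.sum_comm
      _ = ∑ p : Fin 4 × Fin m, (cf p : K) * t^(p.1:ℕ) * eb p.2 := by
            rw [Fintype.sum_prod_type]
      _ = ∑ p : Fin 4 × Fin m, cf p • (t^(p.1:ℕ) * eb p.2) := by
            refine Finset.sum_congr rfl fun p _ => ?_
            rw [Algebra.smul_def, IntermediateField.algebraMap_apply]
            ring
      _ = 0 := hcf
    have hdz : ∀ j, d j = 0 :=
      Fintype.linearIndependent_iff.mp eb.linearIndependent d key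
    intro p
    obtain ⟨i, j⟩ := p
    have hdj : (∑ i' : Fin 4, (cf (i',j) : K) * t^(i':ℕ)) = 0 := by
      have := congrArg (Subtype.val) (hdz j)
      simpa [hd] using this
    rw [Fin.sum_univ_four] at hdj
    simp only [show ((0:Fin 4):ℕ) = 0 from rfl, show ((1:Fin 4):ℕ) = 1 from rfl,
      show ((2:Fin 4):ℕ) = 2 from rfl, show ((3:Fin 4):ℕ) = 3 from rfl,
      pow_zero, pow_one] at hdj
    have hz := hindep _ _ _ _ (cf ((0:Fin 4),j)).2 (cf ((1:Fin 4),j)).2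
      (cf ((2:Fin 4),j)).2 (cf ((3:Fin 4),j)).2 (by linear_combination hdj)
    fin_cases i
    · exact ZeroMemClass.coe_eq_zero.mp hz.1
    · exact ZeroMemClass.coe_eq_zero.mp hz.2.1
    · exact ZeroMemClass.coe_eq_zero.mp hz.2.2.1
    · exact ZeroMemClass.coe_eq_zero.mp hz.2.2.2
  have hlow : 4 * m ≤ Module.finrank F K := by
    have := hli.fintype_card_le_finrank
    simpa [mul_comm] using this
  omega

lemma SY_kSq_ne_kFour (h2 : (2:K) = 0)
    (hfg : (⊤ : IntermediateField k K).FG)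
    (htr : ∃ x : K, Transcendental k x ∧
      Algebra.IsAlgebraic (IntermediateField.adjoin k {x}) K)
    (hdeg : Module.finrank (kSq k K) K = 2) :
    kSq k K ≠ kFour k K := by
  intro hEq
  obtain ⟨t, ht, halgE⟩ := htr
  haveI : FiniteDimensional (IntermediateField.adjoin k ({t} : Set K)) K :=
    SY_fd_of_fg_algebraic hfg _ halgE
  refine SY_rank_contradiction h2 (IntermediateField.adjoin k ({t} : Set K))
    (IntermediateField.adjoin k ({t^4} : Set K)) t
    (IntermediateField.subset_adjoin k {t} rfl) ?_ ?_ ?_ hdeg hEq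
  · rw [IntermediateField.adjoin_le_iff]
    rintro w hw
    rcases hw with rfl
    exact pow_mem (IntermediateField.subset_adjoin k {t} rfl) 4
  · exact fun c hc => SY_pow4_adjoin h2 t hc
  · exact fun c0 c1 c2 c3 m0 m1 m2 m3 hsum => SY_indep_four ht m0 m1 m2 m3 hsum

end SYaux2

section SYaux3

open IntermediateField

variable {k K : Type*} [Field k] [Field K] [Algebra k K]

lemma SY_crit (h2 : (2:K) = 0)
    (hfg : (⊤ : IntermediateField k K).FG)
    (htr : ∃ x : K, Transcendental k x ∧
      Algebra.IsAlgebraic (IntermediateField.adjoin k {x}) K)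
    (hdeg : Module.finrank (kSq k K) K = 2)
    {x : K} (hx : x ∉ kSq k K) : x^2 ∉ kFour k K := by
  intro hmem
  apply SY_kSq_ne_kFour h2 hfg htr hdeg
  apply le_antisymm ?_ SY_kFour_le_kSq
  rw [kSq, IntermediateField.adjoin_le_iff]
  rintro w ⟨z, rfl⟩
  obtain ⟨u, v, hu, hv, rfl⟩ := SY_exists_rep hdeg hx z
  have hexp : (u + v*x)^2 = u^2 + v^2*x^2 := by linear_combination (u*v*x)*h2
  rw [hexp]
  exact add_mem (SY_sq_mem_kFour h2 hu) (mul_mem (SY_sq_mem_kFour h2 hv) hmem)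

lemma SY_indep4g (h2 : (2:K) = 0)
    (hfg : (⊤ : IntermediateField k K).FG)
    (htr : ∃ x : K, Transcendental k x ∧
      Algebra.IsAlgebraic (IntermediateField.adjoin k {x}) K)
    (hdeg : Module.finrank (kSq k K) K = 2)
    {g : K} (hg : g ∉ kSq k K) {v0 v1 v2 v3 : K}
    (m0 : v0 ∈ kFour k K) (m1 : v1 ∈ kFour k K)
    (m2 : v2 ∈ kFour k K) (m3 : v3 ∈ kFour k K)
    (hsum : v0 + v1*g + v2*g^2 + v3*g^3 = 0) :
    v0 = 0 ∧ v1 = 0 ∧ v2 = 0 ∧ v3 = 0 := by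
  have hcrit := SY_crit h2 hfg htr hdeg hg
  obtain ⟨A, B⟩ := SY_pair_indep (E := kSq k K) hg
    (add_mem (SY_kFour_le_kSq m0) (mul_mem (SY_kFour_le_kSq m2) (SY_sq_mem_kSq g)))
    (add_mem (SY_kFour_le_kSq m1) (mul_mem (SY_kFour_le_kSq m3) (SY_sq_mem_kSq g)))
    (by linear_combination hsum)
  obtain ⟨h00, h22⟩ := SY_pair_indep (E := kFour k K) hcrit m0 m2 A
  obtain ⟨h11, h33⟩ := SY_pair_indep (E := kFour k K) hcrit m1 m3 B
  exact ⟨h00, h11, h22, h33⟩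

lemma SY_D_eq_zero (h2 : (2:K) = 0) {u : K} (hu : u ∈ kSq k K) :
    KaehlerDifferential.D k K u = 0 := by
  induction hu using IntermediateField.adjoin_induction with
  | mem x hx =>
      obtain ⟨y, rfl⟩ := hx
      rw [Derivation.leibniz_pow]
      rw [← Nat.cast_smul_eq_nsmul K]
      have h2' : ((2:ℕ):K) = 0 := by exact_mod_cast h2
      rw [h2', zero_smul]
  | algebraMap x => exact Derivation.map_algebraMap _ x
  | add x y _ _ ihx ihy => rw [map_add, ihx, ihy, add_zero]
  | inv x _ ihx =>
      by_cases hx0 : x = 0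
      · subst hx0; rw [inv_zero]; exact ihx
      · have hone : (KaehlerDifferential.D k K) (x * x⁻¹) = 0 := by
          rw [mul_inv_cancel₀ hx0]
          exact (KaehlerDifferential.D k K).map_one_eq_zero
        rw [Derivation.leibniz, ihx, smul_zero, add_zero] at hone
        rcases smul_eq_zero.mp hone with h | h
        · exact absurd h hx0
        · exact h
  | mul x y _ _ ihx ihy => rw [Derivation.leibniz, ihx, ihy, smul_zero, smul_zero, add_zero]

/-- Part 1: the Möbius transform of `g` stays outside `k(K²)`. -/
lemma SY_part1 (h2 : (2:K) = 0) {g α β γ δ : K}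
    (hg : g ∉ kSq k K) (hα : α ∈ kFour k K) (hβ : β ∈ kFour k K)
    (hγ : γ ∈ kFour k K) (hδ : δ ∈ kFour k K)
    (hdet : α * δ + β * γ ≠ 0) (hden : γ * g + δ ≠ 0) :
    (α * g + β) / (γ * g + δ) ∉ kSq k K := by
  intro hmem
  set gp := (α * g + β) / (γ * g + δ) with hgp
  have hkey : gp * (γ * g + δ) = α * g + β := by
    rw [hgp]; exact div_mul_cancel₀ _ hden
  have hne : γ * gp - α ≠ 0 := by
    intro h0
    -- then β - δ * gp = 0 as well, giving det = 0
    have hβγ : g * (γ * gp - α) = β - δ * gp := by linear_combination hkey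
    rw [h0, mul_zero] at hβγ
    -- γ * gp = α and δ * gp = β
    apply hdet
    have e1 : γ * gp = α := by linear_combination h0
    have e2 : δ * gp = β := by linear_combination hβγ
    -- det = α δ + β γ = γ gp δ + δ gp γ = 2 γ δ gp = 0
    calc α * δ + β * γ = (γ * gp) * δ + (δ * gp) * γ := by rw [e1, e2]
    _ = (γ * δ * gp) * 2 := by ring
    _ = 0 := by rw [h2, mul_zero]
  have hgmem : g = (β - δ * gp) / (γ * gp - α) := by
    rw [eq_div_iff hne]
    linear_combination hkey
  apply hg
  rw [hgmem]
  exact div_mem (sub_mem (SY_kFour_le_kSq hβ) (mul_mem (SY_kFour_le_kSq hδ) hmem))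
    (sub_mem (mul_mem (SY_kFour_le_kSq hγ) hmem) (SY_kFour_le_kSq hα))

lemma SY_den_ne (hg : g ∉ kSq k K) (hγ : γ ∈ kFour k K) (hδ : δ ∈ kFour k K)
    {α β : K} (hdet : α * δ + β * γ ≠ 0) : γ * g + δ ≠ 0 := by
  intro h0
  by_cases hγ0 : γ = 0
  · apply hdet
    have hδ0 : δ = 0 := by rw [hγ0] at h0; linear_combination h0
    rw [hγ0, hδ0]; ring
  · apply hg
    have : g = -δ / γ := by
      rw [eq_div_iff hγ0]
      linear_combination h0
    rw [this]
    exact div_mem (neg_mem (SY_kFour_le_kSq hδ)) (SY_kFour_le_kSq hγ)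

end SYaux3

section SYcalc

set_option maxHeartbeats 4000000 in
lemma SY_calc {F : Type*} [Field F] (h2 : (2:F) = 0)
    (f0 f1 f2 f3 j0 j1 j2 j3 a b c e G Gp : F)
    (hrel : Gp * (c^4*G + e^4) = a^4*G + b^4)
    (hD : a*e + b*c ≠ 0)
    (hDf : f1^2 + f3^2*G ≠ 0)
    (hDj : j1^2 + j3^2*Gp ≠ 0)
    (E0 : f0*e^3 + G*(f1*c^3 + f2*c^2*e + f3*c*e^2)
        = j0*e^3 + j1*b*e^2 + j2*b^2*e + j3*b^3)
    (E1 : f0*c*e^2 + f1*e^3 + G*(f2*c^3 + f3*c^2*e)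
        = j0*c*e^2 + j1*a*e^2 + j2*b^2*c + j3*a*b^2)
    (E2 : f0*c^2*e + f1*c*e^2 + f2*e^3 + G*(f3*c^3)
        = j0*c^2*e + j1*b*c^2 + j2*a^2*e + j3*a^2*b)
    (E3 : f0*c^3 + f1*c^2*e + f2*c*e^2 + f3*e^3
        = j0*c^3 + j1*a*c^2 + j2*a^2*c + j3*a^3) :
    ((f1*f3 + f2^2)/(f1^2 + f3^2*G))^2 * (c^4*G + e^4)^2
      = ((j1*j3 + j2^2)/(j1^2 + j3^2*Gp))^2 * (a*e+b*c)^4 := by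
  have hj1 : j1*(a*e+b*c)^3
      = (f0*e^3 + G*(f1*c^3 + f2*c^2*e + f3*c*e^2))*a^2*c
        + (f0*c*e^2 + f1*e^3 + G*(f2*c^3 + f3*c^2*e))*a^2*e
        + (f0*c^2*e + f1*c*e^2 + f2*e^3 + G*(f3*c^3))*b^2*c
        + (f0*c^3 + f1*c^2*e + f2*c*e^2 + f3*e^3)*b^2*e := by
    linear_combination (a^2*c)*E0 + (a^2*e)*E1 + (b^2*c)*E2 + (b^2*e)*E3 + (j3*a^2*b^3*c + j3*a^3*b^2*e + 2*j2*a^2*b^2*c*e + j1*b^3*c^3 + 2*j1*a*b^2*c^2*e + 2*j1*a^2*b*c*e^2 + j1*a^3*e^3 + j0*b^2*c^3*e + j0*a^2*c*e^3 - f3*b^2*e^4 - f3*b^2*c^4*G - 2*f3*a^2*c^2*e^2*G - 2*f2*b^2*c*e^3 - 2*f2*a^2*c^3*e*G - 2*f1*b^2*c^2*e^2 - f1*a^2*e^4 - f1*a^2*c^4*G - 2*f0*b^2*c^3*e - 2*f0*a^2*c*e^3)*h2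
  have hj2 : j2*(a*e+b*c)^3
      = (f0*e^3 + G*(f1*c^3 + f2*c^2*e + f3*c*e^2))*a*c^2
        + (f0*c*e^2 + f1*e^3 + G*(f2*c^3 + f3*c^2*e))*b*c^2
        + (f0*c^2*e + f1*c*e^2 + f2*e^3 + G*(f3*c^3))*a*e^2
        + (f0*c^3 + f1*c^2*e + f2*c*e^2 + f3*e^3)*b*e^2 := by
    linear_combination (a*c^2)*E0 + (b*c^2)*E1 + (a*e^2)*E2 + (b*e^2)*E3 + (j3*a*b^3*c^2 + j3*a^3*b*e^2 + j2*b^3*c^3 + 2*j2*a*b^2*c^2*e + 2*j2*a^2*b*c*e^2 + j2*a^3*e^3 + 2*j1*a*b*c^2*e^2 + j0*b*c^3*e^2 + j0*a*c^2*e^3 - f3*b*e^5 - f3*b*c^4*e*G - 2*f3*a*c^3*e^2*G - f2*b*c*e^4 - f2*b*c^5*G - f2*a*e^5 - f2*a*c^4*e*G - 2*f1*b*c^2*e^3 - f1*a*c*e^4 - f1*a*c^5*G - 2*f0*b*c^3*e^2 - 2*f0*a*c^2*e^3)*h2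
  have hj3 : j3*(a*e+b*c)^3
      = (f0*e^3 + G*(f1*c^3 + f2*c^2*e + f3*c*e^2))*c^3
        + (f0*c*e^2 + f1*e^3 + G*(f2*c^3 + f3*c^2*e))*c^2*e
        + (f0*c^2*e + f1*c*e^2 + f2*e^3 + G*(f3*c^3))*c*e^2
        + (f0*c^3 + f1*c^2*e + f2*c*e^2 + f3*e^3)*e^3 := by
    linear_combination (c^3)*E0 + (c^2*e)*E1 + (c*e^2)*E2 + (e^3)*E3 + (j3*b^3*c^3 + 2*j3*a*b^2*c^2*e + 2*j3*a^2*b*c*e^2 + j3*a^3*e^3 + j2*b^2*c^3*e + j2*a^2*c*e^3 + j1*b*c^3*e^2 + j1*a*c^2*e^3 + 2*j0*c^3*e^3 - f3*e^6 - 3*f3*c^4*e^2*G - 2*f2*c*e^5 - 2*f2*c^5*e*G - 3*f1*c^2*e^4 - f1*c^6*G - 4*f0*c^3*e^3)*h2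
  have key6 : (f1*f3+f2^2) * ((j1*(a*e+b*c)^3)^2*(c^4*G+e^4) + (j3*(a*e+b*c)^3)^2*(a^4*G+b^4))
      = ((j1*(a*e+b*c)^3)*(j3*(a*e+b*c)^3) + (j2*(a*e+b*c)^3)^2)*(a*e+b*c)^2*(f1^2+f3^2*G) := by
    rw [hj1, hj2, hj3]
    linear_combination (-f3^4*b^4*c^2*e^10*G - 3*f3^4*b^4*c^6*e^6*G^2 - 2*f3^4*b^4*c^10*e^2*G^3 - 2*f3^4*a*b^3*c*e^11*G - 8*f3^4*a*b^3*c^5*e^7*G^2 - 6*f3^4*a*b^3*c^9*e^3*G^3 - f3^4*a^2*b^2*e^12*G - 8*f3^4*a^2*b^2*c^4*e^8*G^2 - 11*f3^4*a^2*b^2*c^8*e^4*G^3 - 4*f3^4*a^3*b*c^3*e^9*G^2 - 12*f3^4*a^3*b*c^7*e^5*G^3 - f3^4*a^4*c^2*e^10*G^2 - 5*f3^4*a^4*c^6*e^6*G^3 - 3*f2*f3^3*b^4*c^3*e^9*G - 7*f2*f3^3*b^4*c^7*e^5*G^2 - 2*f2*f3^3*b^4*c^11*e*G^3 - 7*f2*f3^3*a*b^3*c^2*e^10*G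 - 18*f2*f3^3*a*b^3*c^6*e^6*G^2 - 7*f2*f3^3*a*b^3*c^10*e^2*G^3 - 5*f2*f3^3*a^2*b^2*c*e^11*G - 20*f2*f3^3*a^2*b^2*c^5*e^7*G^2 - 15*f2*f3^3*a^2*b^2*c^9*e^3*G^3 - f2*f3^3*a^3*b*e^12*G - 14*f2*f3^3*a^3*b*c^4*e^8*G^2 - 17*f2*f3^3*a^3*b*c^8*e^4*G^3 - 5*f2*f3^3*a^4*c^3*e^9*G^2 - 7*f2*f3^3*a^4*c^7*e^5*G^3 + f2^2*f3^2*b^4*e^12 + 2*f2^2*f3^2*b^4*c^4*e^8*G + 3*f2^2*f3^2*b^4*c^8*e^4*G^2 - 6*f2^2*f3^2*a*b^3*c^3*e^9*G - 8*f2^2*f3^2*a*b^3*c^7*e^5*G^2 - 2*f2^2*f3^2*a*b^3*c^11*e*G^3 - 3*f2^2*f3^2*a^2*b^2*c^2*e^10*G - 6*f2^2*f3^2*a^2*b^2*c^6*e^6*G^2 - 3*f2^2*f3^2*a^2*b^2*c^10*e^2*G^3 - 2*f2^2*f3^2*a^3*b*c*e^11*G - 8*f2^2*f3^2*a^3*b*c^5*e^7*G^2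 - 6*f2^2*f3^2*a^3*b*c^9*e^3*G^3 + 2*f2^2*f3^2*a^4*c^4*e^8*G^2 + 4*f2^2*f3^2*a^4*c^8*e^4*G^3 + 4*f2^3*f3*b^4*c*e^11 + 12*f2^3*f3*b^4*c^5*e^7*G + 8*f2^3*f3*b^4*c^9*e^3*G^2 + 6*f2^3*f3*a^2*b^2*c^3*e^9*G + 8*f2^3*f3*a^2*b^2*c^7*e^5*G^2 + 2*f2^3*f3*a^2*b^2*c^11*e*G^3 + 2*f2^3*f3*a^4*c*e^11*G + 12*f2^3*f3*a^4*c^5*e^7*G^2 + 10*f2^3*f3*a^4*c^9*e^3*G^3 + 4*f2^4*b^4*c^2*e^10 + 6*f2^4*b^4*c^6*e^6*G + 2*f2^4*b^4*c^10*e^2*G^2 + 4*f2^4*a^2*b^2*c^4*e^8*G + 4*f2^4*a^2*b^2*c^8*e^4*G^2 + 2*f2^4*a^4*c^2*e^10*G + 6*f2^4*a^4*c^6*e^6*G^2 + 4*f2^4*a^4*c^10*e^2*G^3 + f1*f3^3*b^4*e^12 - f1*f3^3*b^4*c^8*e^4*G^2 - 10*f1*f3^3*a*b^3*c^3*e^9*G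 - 20*f1*f3^3*a*b^3*c^7*e^5*G^2 - 2*f1*f3^3*a*b^3*c^11*e*G^3 - 5*f1*f3^3*a^2*b^2*c^2*e^10*G - 22*f1*f3^3*a^2*b^2*c^6*e^6*G^2 - 5*f1*f3^3*a^2*b^2*c^10*e^2*G^3 - 2*f1*f3^3*a^3*b*c*e^11*G - 20*f1*f3^3*a^3*b*c^5*e^7*G^2 - 10*f1*f3^3*a^3*b*c^9*e^3*G^3 - 2*f1*f3^3*a^4*c^4*e^8*G^2 + 2*f1*f3^3*a^4*c^8*e^4*G^3 + 4*f1*f2*f3^2*b^4*c*e^11 + 5*f1*f2*f3^2*b^4*c^5*e^7*G + 3*f1*f2*f3^2*b^4*c^9*e^3*G^2 - 17*f1*f2*f3^2*a*b^3*c^4*e^8*G - 14*f1*f2*f3^2*a*b^3*c^8*e^4*G^2 - f1*f2*f3^2*a*b^3*c^12*G^3 - 9*f1*f2*f3^2*a^2*b^2*c^3*e^9*G - 12*f1*f2*f3^2*a^2*b^2*c^7*e^5*G^2 - 3*f1*f2*f3^2*a^2*b^2*c^11*e*G^3 - 7*f1*f2*f3^2*a^3*b*c^2*e^10*G - 18*f1*f2*f3^2*a^3*b*c^6*e^6*G^2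 - 7*f1*f2*f3^2*a^3*b*c^10*e^2*G^3 + 5*f1*f2*f3^2*a^4*c^5*e^7*G^2 + 7*f1*f2*f3^2*a^4*c^9*e^3*G^3 + 9*f1*f2^2*f3*b^4*c^2*e^10 + 20*f1*f2^2*f3*b^4*c^6*e^6*G + 7*f1*f2^2*f3*b^4*c^10*e^2*G^2 + f1*f2^2*f3*a^2*b^2*e^12 + 11*f1*f2^2*f3*a^2*b^2*c^4*e^8*G + 11*f1*f2^2*f3*a^2*b^2*c^8*e^4*G^2 + f1*f2^2*f3*a^2*b^2*c^12*G^3 + 7*f1*f2^2*f3*a^4*c^2*e^10*G + 20*f1*f2^2*f3*a^4*c^6*e^6*G^2 + 9*f1*f2^2*f3*a^4*c^10*e^2*G^3 + 10*f1*f2^3*b^4*c^3*e^9 + 12*f1*f2^3*b^4*c^7*e^5*G + 2*f1*f2^3*b^4*c^11*e*G^2 + 2*f1*f2^3*a^2*b^2*c*e^11 + 8*f1*f2^3*a^2*b^2*c^5*e^7*G + 6*f1*f2^3*a^2*b^2*c^9*e^3*G^2 + 8*f1*f2^3*a^4*c^3*e^9*G + 12*f1*f2^3*a^4*c^7*e^5*G^2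 + 4*f1*f2^3*a^4*c^11*e*G^3 + 4*f1^2*f3^2*b^4*c^2*e^10 + 6*f1^2*f3^2*b^4*c^6*e^6*G + 2*f1^2*f3^2*b^4*c^10*e^2*G^2 - 2*f1^2*f3^2*a*b^3*c*e^11 - 20*f1^2*f3^2*a*b^3*c^5*e^7*G - 10*f1^2*f3^2*a*b^3*c^9*e^3*G^2 - 12*f1^2*f3^2*a^2*b^2*c^4*e^8*G - 12*f1^2*f3^2*a^2*b^2*c^8*e^4*G^2 - 10*f1^2*f3^2*a^3*b*c^3*e^9*G - 20*f1^2*f3^2*a^3*b*c^7*e^5*G^2 - 2*f1^2*f3^2*a^3*b*c^11*e*G^3 + 2*f1^2*f3^2*a^4*c^2*e^10*G + 6*f1^2*f3^2*a^4*c^6*e^6*G^2 + 4*f1^2*f3^2*a^4*c^10*e^2*G^3 + 7*f1^2*f2*f3*b^4*c^3*e^9 + 5*f1^2*f2*f3*b^4*c^7*e^5*G - 7*f1^2*f2*f3*a*b^3*c^2*e^10 - 18*f1^2*f2*f3*a*b^3*c^6*e^6*G - 7*f1^2*f2*f3*a*b^3*c^10*e^2*G^2 - 3*f1^2*f2*f3*a^2*b^2*c*e^11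 - 12*f1^2*f2*f3*a^2*b^2*c^5*e^7*G - 9*f1^2*f2*f3*a^2*b^2*c^9*e^3*G^2 - f1^2*f2*f3*a^3*b*e^12 - 14*f1^2*f2*f3*a^3*b*c^4*e^8*G - 17*f1^2*f2*f3*a^3*b*c^8*e^4*G^2 + 3*f1^2*f2*f3*a^4*c^3*e^9*G + 5*f1^2*f2*f3*a^4*c^7*e^5*G^2 + 4*f1^2*f2*f3*a^4*c^11*e*G^3 + 4*f1^2*f2^2*b^4*c^4*e^8 + 2*f1^2*f2^2*b^4*c^8*e^4*G - 6*f1^2*f2^2*a*b^3*c^3*e^9 - 8*f1^2*f2^2*a*b^3*c^7*e^5*G - 2*f1^2*f2^2*a*b^3*c^11*e*G^2 - 3*f1^2*f2^2*a^2*b^2*c^2*e^10 - 6*f1^2*f2^2*a^2*b^2*c^6*e^6*G - 3*f1^2*f2^2*a^2*b^2*c^10*e^2*G^2 - 2*f1^2*f2^2*a^3*b*c*e^11 - 8*f1^2*f2^2*a^3*b*c^5*e^7*G - 6*f1^2*f2^2*a^3*b*c^9*e^3*G^2 + 3*f1^2*f2^2*a^4*c^4*e^8*G + 2*f1^2*f2^2*a^4*c^8*e^4*G^2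 + f1^2*f2^2*a^4*c^12*G^3 + 2*f1^3*f3*b^4*c^4*e^8 - 2*f1^3*f3*b^4*c^8*e^4*G - 10*f1^3*f3*a*b^3*c^3*e^9 - 20*f1^3*f3*a*b^3*c^7*e^5*G - 2*f1^3*f3*a*b^3*c^11*e*G^2 - 5*f1^3*f3*a^2*b^2*c^2*e^10 - 22*f1^3*f3*a^2*b^2*c^6*e^6*G - 5*f1^3*f3*a^2*b^2*c^10*e^2*G^2 - 2*f1^3*f3*a^3*b*c*e^11 - 20*f1^3*f3*a^3*b*c^5*e^7*G - 10*f1^3*f3*a^3*b*c^9*e^3*G^2 - f1^3*f3*a^4*c^4*e^8*G + f1^3*f3*a^4*c^12*G^3 - 7*f1^3*f2*b^4*c^5*e^7 - 5*f1^3*f2*b^4*c^9*e^3*G - 17*f1^3*f2*a*b^3*c^4*e^8 - 14*f1^3*f2*a*b^3*c^8*e^4*G - f1^3*f2*a*b^3*c^12*G^2 - 15*f1^3*f2*a^2*b^2*c^3*e^9 - 20*f1^3*f2*a^2*b^2*c^7*e^5*G - 5*f1^3*f2*a^2*b^2*c^11*e*G^2 - 7*f1^3*f2*a^3*b*c^2*e^10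 - 18*f1^3*f2*a^3*b*c^6*e^6*G - 7*f1^3*f2*a^3*b*c^10*e^2*G^2 - 2*f1^3*f2*a^4*c*e^11 - 7*f1^3*f2*a^4*c^5*e^7*G - 3*f1^3*f2*a^4*c^9*e^3*G^2 - 5*f1^4*b^4*c^6*e^6 - f1^4*b^4*c^10*e^2*G - 12*f1^4*a*b^3*c^5*e^7 - 4*f1^4*a*b^3*c^9*e^3*G - 11*f1^4*a^2*b^2*c^4*e^8 - 8*f1^4*a^2*b^2*c^8*e^4*G - f1^4*a^2*b^2*c^12*G^2 - 6*f1^4*a^3*b*c^3*e^9 - 8*f1^4*a^3*b*c^7*e^5*G - 2*f1^4*a^3*b*c^11*e*G^2 - 2*f1^4*a^4*c^2*e^10 - 3*f1^4*a^4*c^6*e^6*G - f1^4*a^4*c^10*e^2*G^2 - 5*f0*f3^3*b^4*c^5*e^7*G - 7*f0*f3^3*b^4*c^9*e^3*G^2 - 12*f0*f3^3*a*b^3*c^4*e^8*G - 20*f0*f3^3*a*b^3*c^8*e^4*G^2 - 10*f0*f3^3*a^2*b^2*c^3*e^9*G - 30*f0*f3^3*a^2*b^2*c^7*e^5*G^2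 - 4*f0*f3^3*a^3*b*c^2*e^10*G - 28*f0*f3^3*a^3*b*c^6*e^6*G^2 - f0*f3^3*a^4*c*e^11*G - 11*f0*f3^3*a^4*c^5*e^7*G^2 - 8*f0*f2*f3^2*b^4*c^6*e^6*G - 4*f0*f2*f3^2*b^4*c^10*e^2*G^2 - 20*f0*f2*f3^2*a*b^3*c^5*e^7*G - 12*f0*f2*f3^2*a*b^3*c^9*e^3*G^2 - 20*f0*f2*f3^2*a^2*b^2*c^4*e^8*G - 20*f0*f2*f3^2*a^2*b^2*c^8*e^4*G^2 - 12*f0*f2*f3^2*a^3*b*c^3*e^9*G - 20*f0*f2*f3^2*a^3*b*c^7*e^5*G^2 - 4*f0*f2*f3^2*a^4*c^2*e^10*G - 8*f0*f2*f3^2*a^4*c^6*e^6*G^2 + 6*f0*f2^2*f3*b^4*c^3*e^9 + 16*f0*f2^2*f3*b^4*c^7*e^5*G + 2*f0*f2^2*f3*b^4*c^11*e*G^2 + 2*f0*f2^2*f3*a^2*b^2*c*e^11 + 8*f0*f2^2*f3*a^2*b^2*c^5*e^7*G + 6*f0*f2^2*f3*a^2*b^2*c^9*e^3*G^2 + 8*f0*f2^2*f3*a^4*c^3*e^9*G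 + 16*f0*f2^2*f3*a^4*c^7*e^5*G^2 + 12*f0*f2^3*b^4*c^4*e^8 + 12*f0*f2^3*b^4*c^8*e^4*G + 4*f0*f2^3*a^2*b^2*c^2*e^10 + 8*f0*f2^3*a^2*b^2*c^6*e^6*G + 4*f0*f2^3*a^2*b^2*c^10*e^2*G^2 + 12*f0*f2^3*a^4*c^4*e^8*G + 12*f0*f2^3*a^4*c^8*e^4*G^2 + 6*f0*f1*f3^2*b^4*c^3*e^9 + 5*f0*f1*f3^2*b^4*c^7*e^5*G + f0*f1*f3^2*b^4*c^11*e*G^2 - 28*f0*f1*f3^2*a*b^3*c^6*e^6*G - 4*f0*f1*f3^2*a*b^3*c^10*e^2*G^2 + 2*f0*f1*f3^2*a^2*b^2*c*e^11 - 22*f0*f1*f3^2*a^2*b^2*c^5*e^7*G - 4*f0*f1*f3^2*a^2*b^2*c^9*e^3*G^2 - 20*f0*f1*f3^2*a^3*b*c^4*e^8*G - 12*f0*f1*f3^2*a^3*b*c^8*e^4*G^2 + f0*f1*f3^2*a^4*c^3*e^9*G + 11*f0*f1*f3^2*a^4*c^7*e^5*G^2 + 12*f0*f1*f2*f3*b^4*c^4*e^8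 + 12*f0*f1*f2*f3*b^4*c^8*e^4*G + 4*f0*f1*f2*f3*a^2*b^2*c^2*e^10 + 8*f0*f1*f2*f3*a^2*b^2*c^6*e^6*G + 4*f0*f1*f2*f3*a^2*b^2*c^10*e^2*G^2 + 12*f0*f1*f2*f3*a^4*c^4*e^8*G + 12*f0*f1*f2*f3*a^4*c^8*e^4*G^2 + 16*f0*f1*f2^2*b^4*c^5*e^7 + 8*f0*f1*f2^2*b^4*c^9*e^3*G + 6*f0*f1*f2^2*a^2*b^2*c^3*e^9 + 8*f0*f1*f2^2*a^2*b^2*c^7*e^5*G + 2*f0*f1*f2^2*a^2*b^2*c^11*e*G^2 + 2*f0*f1*f2^2*a^4*c*e^11 + 16*f0*f1*f2^2*a^4*c^5*e^7*G + 6*f0*f1*f2^2*a^4*c^9*e^3*G^2 + 11*f0*f1^2*f3*b^4*c^5*e^7 + f0*f1^2*f3*b^4*c^9*e^3*G - 12*f0*f1^2*f3*a*b^3*c^4*e^8 - 20*f0*f1^2*f3*a*b^3*c^8*e^4*G - 4*f0*f1^2*f3*a^2*b^2*c^3*e^9 - 22*f0*f1^2*f3*a^2*b^2*c^7*e^5*G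 + 2*f0*f1^2*f3*a^2*b^2*c^11*e*G^2 - 4*f0*f1^2*f3*a^3*b*c^2*e^10 - 28*f0*f1^2*f3*a^3*b*c^6*e^6*G + f0*f1^2*f3*a^4*c*e^11 + 5*f0*f1^2*f3*a^4*c^5*e^7*G + 6*f0*f1^2*f3*a^4*c^9*e^3*G^2 - 8*f0*f1^2*f2*b^4*c^6*e^6 - 4*f0*f1^2*f2*b^4*c^10*e^2*G - 20*f0*f1^2*f2*a*b^3*c^5*e^7 - 12*f0*f1^2*f2*a*b^3*c^9*e^3*G - 20*f0*f1^2*f2*a^2*b^2*c^4*e^8 - 20*f0*f1^2*f2*a^2*b^2*c^8*e^4*G - 12*f0*f1^2*f2*a^3*b*c^3*e^9 - 20*f0*f1^2*f2*a^3*b*c^7*e^5*G - 4*f0*f1^2*f2*a^4*c^2*e^10 - 8*f0*f1^2*f2*a^4*c^6*e^6*G - 11*f0*f1^3*b^4*c^7*e^5 - f0*f1^3*b^4*c^11*e*G - 28*f0*f1^3*a*b^3*c^6*e^6 - 4*f0*f1^3*a*b^3*c^10*e^2*G - 30*f0*f1^3*a^2*b^2*c^5*e^7 - 10*f0*f1^3*a^2*b^2*c^9*e^3*G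 - 20*f0*f1^3*a^3*b*c^4*e^8 - 12*f0*f1^3*a^3*b*c^8*e^4*G - 7*f0*f1^3*a^4*c^3*e^9 - 5*f0*f1^3*a^4*c^7*e^5*G - 6*f0^2*f3^2*b^4*c^8*e^4*G - 16*f0^2*f3^2*a*b^3*c^7*e^5*G - 20*f0^2*f3^2*a^2*b^2*c^6*e^6*G - 16*f0^2*f3^2*a^3*b*c^5*e^7*G - 6*f0^2*f3^2*a^4*c^4*e^8*G + 10*f0^2*f2^2*b^4*c^6*e^6 + 2*f0^2*f2^2*b^4*c^10*e^2*G + 4*f0^2*f2^2*a^2*b^2*c^4*e^8 + 4*f0^2*f2^2*a^2*b^2*c^8*e^4*G + 2*f0^2*f2^2*a^4*c^2*e^10 + 10*f0^2*f2^2*a^4*c^6*e^6*G + 10*f0^2*f1*f3*b^4*c^6*e^6 + 2*f0^2*f1*f3*b^4*c^10*e^2*G + 4*f0^2*f1*f3*a^2*b^2*c^4*e^8 + 4*f0^2*f1*f3*a^2*b^2*c^8*e^4*G + 2*f0^2*f1*f3*a^4*c^2*e^10 + 10*f0^2*f1*f3*a^4*c^6*e^6*G - 6*f0^2*f1^2*b^4*c^8*e^4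 - 16*f0^2*f1^2*a*b^3*c^7*e^5 - 20*f0^2*f1^2*a^2*b^2*c^6*e^6 - 16*f0^2*f1^2*a^3*b*c^5*e^7 - 6*f0^2*f1^2*a^4*c^4*e^8)*h2
  have hcore : (f1*f3+f2^2) * (j1^2*(c^4*G+e^4) + j3^2*(a^4*G+b^4))
      = ((j1*j3 + j2^2)*(a*e+b*c)^2)*(f1^2+f3^2*G) := by
    apply mul_left_cancel₀ (pow_ne_zero 6 hD)
    linear_combination key6
  have hstar : (j1^2 + j3^2*Gp)*(c^4*G+e^4) = j1^2*(c^4*G+e^4) + j3^2*(a^4*G+b^4) := by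
    linear_combination j3^2*hrel
  have hfinal : (f1*f3+f2^2)/(f1^2+f3^2*G)*(c^4*G+e^4)
      = (j1*j3+j2^2)/(j1^2+j3^2*Gp)*(a*e+b*c)^2 := by
    rw [div_mul_eq_mul_div, div_mul_eq_mul_div, div_eq_div_iff hDf hDj]
    linear_combination (f1*f3+f2^2)*hstar + hcore
  linear_combination ((f1*f3+f2^2)/(f1^2+f3^2*G)*(c^4*G+e^4)
    + (j1*j3+j2^2)/(j1^2+j3^2*Gp)*(a*e+b*c)^2) * hfinal

end SYcalc

set_option maxHeartbeats 4000000 in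
/-- **`Γ`-invariance of the Sugiyama–Yasuda symbol in the second argument**
(Lemma 4.4 of Kedlaya–Litt–Witaszek): for `f, g ∈ R = K \ k(K²)` and
`α, β, γ, δ ∈ k(K⁴)` with `αδ + βγ ≠ 0`, the element `g' = (αg + β)/(γg + δ)` again
lies in `R` and `SY(f, g') = SY(f, g)` in `Ω[K⁄k]`. -/
theorem SY_symbol_invariant_snd
    (k K : Type*) [Field k] [CharP k 2] [Field K] [Algebra k K]
    (hfg : (⊤ : IntermediateField k K).FG)
    (htr : ∃ x : K, Transcendental k x ∧
      Algebra.IsAlgebraic (IntermediateField.adjoin k {x}) K)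
    (halg : ∀ x : K, IsAlgebraic k x → x ∈ (algebraMap k K).range)
    (hdeg : Module.finrank (kSq k K) K = 2)
    (L : Type*) [Field L] (ι : K →+* L)
    (hLperf : ∀ x : L, ∃ y : L, y ^ 2 = x)
    (hLinsep : ∀ x : L, ∃ n : ℕ, x ^ 2 ^ n ∈ Set.range ι)
    (f g : K) (hf : f ∉ kSq k K) (hg : g ∉ kSq k K)
    (α β γ δ : K) (hα : α ∈ kFour k K) (hβ : β ∈ kFour k K)
    (hγ : γ ∈ kFour k K) (hδ : δ ∈ kFour k K)
    (hdet : α * δ + β * γ ≠ 0) :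
    (α * g + β) / (γ * g + δ) ∉ kSq k K ∧
    ∀ s s' : K, SYWitness k K L ι f g s →
      SYWitness k K L ι f ((α * g + β) / (γ * g + δ)) s' →
      s • (KaehlerDifferential.D k K g : Ω[K⁄k]) =
        s' • KaehlerDifferential.D k K ((α * g + β) / (γ * g + δ)) := by
  have h2K : (2:K) = 0 := SY_two_eq_zero (k := k)
  have h2L : (2:L) = 0 := by
    have h0 : ι (2:K) = (2:L) := by rw [map_ofNat]
    rw [← h0, h2K, map_zero]
  have hinj : Function.Injective ι := ι.injective
  have hden : γ * g + δ ≠ 0 := SY_den_ne hg hγ hδ hdet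
  refine ⟨SY_part1 h2K hg hα hβ hγ hδ hdet hden, ?_⟩
  intro s s' hw hw'
  obtain ⟨f0, f1, f2, f3, hf0m, hf1m, hf2m, hf3m, hfF, hDf, hs⟩ := hw
  obtain ⟨j0, j1, j2, j3, hj0m, hj1m, hj2m, hj3m, hfH, hDj, hs'⟩ := hw'
  obtain ⟨a, ha⟩ : ∃ w : L, w^4 = ι α := by
    obtain ⟨y, hy⟩ := hLperf (ι α); obtain ⟨z, hz⟩ := hLperf y
    exact ⟨z, by rw [show z^4 = (z^2)^2 from by ring, hz, hy]⟩
  obtain ⟨b, hb⟩ : ∃ w : L, w^4 = ι β := by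
    obtain ⟨y, hy⟩ := hLperf (ι β); obtain ⟨z, hz⟩ := hLperf y
    exact ⟨z, by rw [show z^4 = (z^2)^2 from by ring, hz, hy]⟩
  obtain ⟨c, hc⟩ : ∃ w : L, w^4 = ι γ := by
    obtain ⟨y, hy⟩ := hLperf (ι γ); obtain ⟨z, hz⟩ := hLperf y
    exact ⟨z, by rw [show z^4 = (z^2)^2 from by ring, hz, hy]⟩
  obtain ⟨e, he⟩ : ∃ w : L, w^4 = ι δ := by
    obtain ⟨y, hy⟩ := hLperf (ι δ); obtain ⟨z, hz⟩ := hLperf y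
    exact ⟨z, by rw [show z^4 = (z^2)^2 from by ring, hz, hy]⟩
  obtain ⟨F0, hF0mem, hF0⟩ := hf0m
  obtain ⟨H0, hH0mem, hH0⟩ := hj0m
  obtain ⟨F1, hF1mem, hF1⟩ := hf1m
  obtain ⟨H1, hH1mem, hH1⟩ := hj1m
  obtain ⟨F2, hF2mem, hF2⟩ := hf2m
  obtain ⟨H2, hH2mem, hH2⟩ := hj2m
  obtain ⟨F3, hF3mem, hF3⟩ := hf3m
  obtain ⟨H3, hH3mem, hH3⟩ := hj3m
  have hmapden : ι (γ*g+δ) = c^4 * ι g + e^4 := by rw [map_add, map_mul, ← hc, ← he]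
  have hmapnum : ι (α*g+β) = a^4 * ι g + b^4 := by rw [map_add, map_mul, ← ha, ← hb]
  have hdenL : ι (γ*g+δ) ≠ 0 := fun h0 => hden (hinj (by rw [h0, map_zero]))
  have hrel : ι ((α*g+β)/(γ*g+δ)) * (c^4 * ι g + e^4) = a^4 * ι g + b^4 := by
    rw [map_div₀, ← hmapnum, ← hmapden]
    exact div_mul_cancel₀ _ hdenL
  have hdet4 : (a*e+b*c)^4 = ι (α*δ+β*γ) := by
    rw [map_add, map_mul, map_mul, ← ha, ← he, ← hb, ← hc]
    linear_combination (2*a*b^3*c^3*e + 3*a^2*b^2*c^2*e^2 + 2*a^3*b*c*e^3)*h2L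
  have hDel : a*e+b*c ≠ 0 := by
    intro h0
    apply hdet
    apply hinj
    rw [map_zero, ← hdet4, h0]
    ring
  have gm4 : g^4 ∈ kFour k K := SY_pow4_mem_kFour g
  obtain ⟨U0, hU0def⟩ : ∃ w : K, w = F0*δ^3 + g^4*(F1*γ^3 + F2*γ^2*δ + F3*γ*δ^2) := ⟨_, rfl⟩
  obtain ⟨Q0, hQ0def⟩ : ∃ w : K, w = H0*δ^3 + H1*β*δ^2 + H2*β^2*δ + H3*β^3 := ⟨_, rfl⟩
  obtain ⟨U1, hU1def⟩ : ∃ w : K, w = F0*γ*δ^2 + F1*δ^3 + g^4*(F2*γ^3 + F3*γ^2*δ) := ⟨_, rfl⟩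
  obtain ⟨Q1, hQ1def⟩ : ∃ w : K, w = H0*γ*δ^2 + H1*α*δ^2 + H2*β^2*γ + H3*α*β^2 := ⟨_, rfl⟩
  obtain ⟨U2, hU2def⟩ : ∃ w : K, w = F0*γ^2*δ + F1*γ*δ^2 + F2*δ^3 + g^4*(F3*γ^3) := ⟨_, rfl⟩
  obtain ⟨Q2, hQ2def⟩ : ∃ w : K, w = H0*γ^2*δ + H1*β*γ^2 + H2*α^2*δ + H3*α^2*β := ⟨_, rfl⟩
  obtain ⟨U3, hU3def⟩ : ∃ w : K, w = F0*γ^3 + F1*γ^2*δ + F2*γ*δ^2 + F3*δ^3 := ⟨_, rfl⟩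
  obtain ⟨Q3, hQ3def⟩ : ∃ w : K, w = H0*γ^3 + H1*α*γ^2 + H2*α^2*γ + H3*α^3 := ⟨_, rfl⟩
  have hU0m : U0 ∈ kFour k K := by rw [hU0def]; exact add_mem (mul_mem hF0mem (pow_mem hδ 3)) (mul_mem gm4 (add_mem (add_mem (mul_mem hF1mem (pow_mem hγ 3)) (mul_mem (mul_mem hF2mem (pow_mem hγ 2)) hδ)) (mul_mem (mul_mem hF3mem hγ) (pow_mem hδ 2))))
  have hQ0m : Q0 ∈ kFour k K := by rw [hQ0def]; exact add_mem (add_mem (add_mem (mul_mem hH0mem (pow_mem hδ 3)) (mul_mem (mul_mem hH1mem hβ) (pow_mem hδ 2))) (mul_mem (mul_mem hH2mem (pow_mem hβ 2)) hδ)) (mul_mem hH3mem (pow_mem hβ 3))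
  have hU1m : U1 ∈ kFour k K := by rw [hU1def]; exact add_mem (add_mem (mul_mem (mul_mem hF0mem hγ) (pow_mem hδ 2)) (mul_mem hF1mem (pow_mem hδ 3))) (mul_mem gm4 (add_mem (mul_mem hF2mem (pow_mem hγ 3)) (mul_mem (mul_mem hF3mem (pow_mem hγ 2)) hδ)))
  have hQ1m : Q1 ∈ kFour k K := by rw [hQ1def]; exact add_mem (add_mem (add_mem (mul_mem (mul_mem hH0mem hγ) (pow_mem hδ 2)) (mul_mem (mul_mem hH1mem hα) (pow_mem hδ 2))) (mul_mem (mul_mem hH2mem (pow_mem hβ 2)) hγ)) (mul_mem (mul_mem hH3mem hα) (pow_mem hβ 2))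
  have hU2m : U2 ∈ kFour k K := by rw [hU2def]; exact add_mem (add_mem (add_mem (mul_mem (mul_mem hF0mem (pow_mem hγ 2)) hδ) (mul_mem (mul_mem hF1mem hγ) (pow_mem hδ 2))) (mul_mem hF2mem (pow_mem hδ 3))) (mul_mem gm4 (mul_mem hF3mem (pow_mem hγ 3)))
  have hQ2m : Q2 ∈ kFour k K := by rw [hQ2def]; exact add_mem (add_mem (add_mem (mul_mem (mul_mem hH0mem (pow_mem hγ 2)) hδ) (mul_mem (mul_mem hH1mem hβ) (pow_mem hγ 2))) (mul_mem (mul_mem hH2mem (pow_mem hα 2)) hδ)) (mul_mem (mul_mem hH3mem (pow_mem hα 2)) hβ)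
  have hU3m : U3 ∈ kFour k K := by rw [hU3def]; exact add_mem (add_mem (add_mem (mul_mem hF0mem (pow_mem hγ 3)) (mul_mem (mul_mem hF1mem (pow_mem hγ 2)) hδ)) (mul_mem (mul_mem hF2mem hγ) (pow_mem hδ 2))) (mul_mem hF3mem (pow_mem hδ 3))
  have hQ3m : Q3 ∈ kFour k K := by rw [hQ3def]; exact add_mem (add_mem (add_mem (mul_mem hH0mem (pow_mem hγ 3)) (mul_mem (mul_mem hH1mem hα) (pow_mem hγ 2))) (mul_mem (mul_mem hH2mem (pow_mem hα 2)) hγ)) (mul_mem hH3mem (pow_mem hα 3))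
  have hiU0 : ι U0 = (f0*e^3 + ι g*(f1*c^3 + f2*c^2*e + f3*c*e^2))^4 := by
    rw [hU0def]
    simp only [map_add, map_mul, map_pow]
    simp only [hF0, hF1, hF2, hF3, ← hc, ← he]
    linear_combination (-2*f2*f3^3*c^5*e^7*(ι g)^4 - 3*f2^2*f3^2*c^6*e^6*(ι g)^4 - 2*f2^3*f3*c^7*e^5*(ι g)^4 - 2*f1*f3^3*c^6*e^6*(ι g)^4 - 6*f1*f2*f3^2*c^7*e^5*(ι g)^4 - 6*f1*f2^2*f3*c^8*e^4*(ι g)^4 - 2*f1*f2^3*c^9*e^3*(ι g)^4 - 3*f1^2*f3^2*c^8*e^4*(ι g)^4 - 6*f1^2*f2*f3*c^9*e^3*(ι g)^4 - 3*f1^2*f2^2*c^10*e^2*(ι g)^4 - 2*f1^3*f3*c^10*e^2*(ι g)^4 - 2*f1^3*f2*c^11*e*(ι g)^4 - 2*f0*f3^3*c^3*e^9*(ι g)^3 - 6*f0*f2*f3^2*c^4*e^8*(ι g)^3 - 6*f0*f2^2*f3*c^5*e^7*(ι g)^3 - 2*f0*f2^3*c^6*e^6*(ι g)^3 - 6*f0*f1*f3^2*c^5*e^7*(ι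 g)^3 - 12*f0*f1*f2*f3*c^6*e^6*(ι g)^3 - 6*f0*f1*f2^2*c^7*e^5*(ι g)^3 - 6*f0*f1^2*f3*c^7*e^5*(ι g)^3 - 6*f0*f1^2*f2*c^8*e^4*(ι g)^3 - 2*f0*f1^3*c^9*e^3*(ι g)^3 - 3*f0^2*f3^2*c^2*e^10*(ι g)^2 - 6*f0^2*f2*f3*c^3*e^9*(ι g)^2 - 3*f0^2*f2^2*c^4*e^8*(ι g)^2 - 6*f0^2*f1*f3*c^4*e^8*(ι g)^2 - 6*f0^2*f1*f2*c^5*e^7*(ι g)^2 - 3*f0^2*f1^2*c^6*e^6*(ι g)^2 - 2*f0^3*f3*c*e^11*(ι g) - 2*f0^3*f2*c^2*e^10*(ι g) - 2*f0^3*f1*c^3*e^9*(ι g))*h2L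
  have hiQ0 : ι Q0 = (j0*e^3 + j1*b*e^2 + j2*b^2*e + j3*b^3)^4 := by
    rw [hQ0def]
    simp only [map_add, map_mul, map_pow]
    simp only [hH0, hH1, hH2, hH3, ← ha, ← hb, ← hc, ← he]
    linear_combination (-2*j2*j3^3*b^11*e - 3*j2^2*j3^2*b^10*e^2 - 2*j2^3*j3*b^9*e^3 - 2*j1*j3^3*b^10*e^2 - 6*j1*j2*j3^2*b^9*e^3 - 6*j1*j2^2*j3*b^8*e^4 - 2*j1*j2^3*b^7*e^5 - 3*j1^2*j3^2*b^8*e^4 - 6*j1^2*j2*j3*b^7*e^5 - 3*j1^2*j2^2*b^6*e^6 - 2*j1^3*j3*b^6*e^6 - 2*j1^3*j2*b^5*e^7 - 2*j0*j3^3*b^9*e^3 - 6*j0*j2*j3^2*b^8*e^4 - 6*j0*j2^2*j3*b^7*e^5 - 2*j0*j2^3*b^6*e^6 - 6*j0*j1*j3^2*b^7*e^5 - 12*j0*j1*j2*j3*b^6*e^6 - 6*j0*j1*j2^2*b^5*e^7 - 6*j0*j1^2*j3*b^5*e^7 - 6*j0*j1^2*j2*b^4*e^8 - 2*j0*j1^3*b^3*e^9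 - 3*j0^2*j3^2*b^6*e^6 - 6*j0^2*j2*j3*b^5*e^7 - 3*j0^2*j2^2*b^4*e^8 - 6*j0^2*j1*j3*b^4*e^8 - 6*j0^2*j1*j2*b^3*e^9 - 3*j0^2*j1^2*b^2*e^10 - 2*j0^3*j3*b^3*e^9 - 2*j0^3*j2*b^2*e^10 - 2*j0^3*j1*b*e^11)*h2L
  have hiU1 : ι U1 = (f0*c*e^2 + f1*e^3 + ι g*(f2*c^3 + f3*c^2*e))^4 := by
    rw [hU1def]
    simp only [map_add, map_mul, map_pow]
    simp only [hF0, hF1, hF2, hF3, ← hc, ← he]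
    linear_combination (-2*f2*f3^3*c^9*e^3*(ι g)^4 - 3*f2^2*f3^2*c^10*e^2*(ι g)^4 - 2*f2^3*f3*c^11*e*(ι g)^4 - 2*f1*f3^3*c^6*e^6*(ι g)^3 - 6*f1*f2*f3^2*c^7*e^5*(ι g)^3 - 6*f1*f2^2*f3*c^8*e^4*(ι g)^3 - 2*f1*f2^3*c^9*e^3*(ι g)^3 - 3*f1^2*f3^2*c^4*e^8*(ι g)^2 - 6*f1^2*f2*f3*c^5*e^7*(ι g)^2 - 3*f1^2*f2^2*c^6*e^6*(ι g)^2 - 2*f1^3*f3*c^2*e^10*(ι g) - 2*f1^3*f2*c^3*e^9*(ι g) - 2*f0*f3^3*c^7*e^5*(ι g)^3 - 6*f0*f2*f3^2*c^8*e^4*(ι g)^3 - 6*f0*f2^2*f3*c^9*e^3*(ι g)^3 - 2*f0*f2^3*c^10*e^2*(ι g)^3 - 6*f0*f1*f3^2*c^5*e^7*(ι g)^2 - 12*f0*f1*f2*f3*c^6*e^6*(ι g)^2 - 6*f0*f1*f2^2*c^7*e^5*(ι g)^2 - 6*f0*f1^2*f3*c^3*e^9*(ι g) - 6*f0*f1^2*f2*c^4*e^8*(ι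 g) - 2*f0*f1^3*c*e^11 - 3*f0^2*f3^2*c^6*e^6*(ι g)^2 - 6*f0^2*f2*f3*c^7*e^5*(ι g)^2 - 3*f0^2*f2^2*c^8*e^4*(ι g)^2 - 6*f0^2*f1*f3*c^4*e^8*(ι g) - 6*f0^2*f1*f2*c^5*e^7*(ι g) - 3*f0^2*f1^2*c^2*e^10 - 2*f0^3*f3*c^5*e^7*(ι g) - 2*f0^3*f2*c^6*e^6*(ι g) - 2*f0^3*f1*c^3*e^9)*h2L
  have hiQ1 : ι Q1 = (j0*c*e^2 + j1*a*e^2 + j2*b^2*c + j3*a*b^2)^4 := by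
    rw [hQ1def]
    simp only [map_add, map_mul, map_pow]
    simp only [hH0, hH1, hH2, hH3, ← ha, ← hb, ← hc, ← he]
    linear_combination (-2*j2*j3^3*a^3*b^8*c - 3*j2^2*j3^2*a^2*b^8*c^2 - 2*j2^3*j3*a*b^8*c^3 - 2*j1*j3^3*a^4*b^6*e^2 - 6*j1*j2*j3^2*a^3*b^6*c*e^2 - 6*j1*j2^2*j3*a^2*b^6*c^2*e^2 - 2*j1*j2^3*a*b^6*c^3*e^2 - 3*j1^2*j3^2*a^4*b^4*e^4 - 6*j1^2*j2*j3*a^3*b^4*c*e^4 - 3*j1^2*j2^2*a^2*b^4*c^2*e^4 - 2*j1^3*j3*a^4*b^2*e^6 - 2*j1^3*j2*a^3*b^2*c*e^6 - 2*j0*j3^3*a^3*b^6*c*e^2 - 6*j0*j2*j3^2*a^2*b^6*c^2*e^2 - 6*j0*j2^2*j3*a*b^6*c^3*e^2 - 2*j0*j2^3*b^6*c^4*e^2 - 6*j0*j1*j3^2*a^3*b^4*c*e^4 - 12*j0*j1*j2*j3*a^2*b^4*c^2*e^4 - 6*j0*j1*j2^2*a*b^4*c^3*e^4 - 6*j0*j1^2*j3*a^3*b^2*c*e^6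 - 6*j0*j1^2*j2*a^2*b^2*c^2*e^6 - 2*j0*j1^3*a^3*c*e^8 - 3*j0^2*j3^2*a^2*b^4*c^2*e^4 - 6*j0^2*j2*j3*a*b^4*c^3*e^4 - 3*j0^2*j2^2*b^4*c^4*e^4 - 6*j0^2*j1*j3*a^2*b^2*c^2*e^6 - 6*j0^2*j1*j2*a*b^2*c^3*e^6 - 3*j0^2*j1^2*a^2*c^2*e^8 - 2*j0^3*j3*a*b^2*c^3*e^6 - 2*j0^3*j2*b^2*c^4*e^6 - 2*j0^3*j1*a*c^3*e^8)*h2L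
  have hiU2 : ι U2 = (f0*c^2*e + f1*c*e^2 + f2*e^3 + ι g*(f3*c^3))^4 := by
    rw [hU2def]
    simp only [map_add, map_mul, map_pow]
    simp only [hF0, hF1, hF2, hF3, ← hc, ← he]
    linear_combination (-2*f2*f3^3*c^9*e^3*(ι g)^3 - 3*f2^2*f3^2*c^6*e^6*(ι g)^2 - 2*f2^3*f3*c^3*e^9*(ι g) - 2*f1*f3^3*c^10*e^2*(ι g)^3 - 6*f1*f2*f3^2*c^7*e^5*(ι g)^2 - 6*f1*f2^2*f3*c^4*e^8*(ι g) - 2*f1*f2^3*c*e^11 - 3*f1^2*f3^2*c^8*e^4*(ι g)^2 - 6*f1^2*f2*f3*c^5*e^7*(ι g) - 3*f1^2*f2^2*c^2*e^10 - 2*f1^3*f3*c^6*e^6*(ι g) - 2*f1^3*f2*c^3*e^9 - 2*f0*f3^3*c^11*e*(ι g)^3 - 6*f0*f2*f3^2*c^8*e^4*(ι g)^2 - 6*f0*f2^2*f3*c^5*e^7*(ι g) - 2*f0*f2^3*c^2*e^10 - 6*f0*f1*f3^2*c^9*e^3*(ι g)^2 - 12*f0*f1*f2*f3*c^6*e^6*(ι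 g) - 6*f0*f1*f2^2*c^3*e^9 - 6*f0*f1^2*f3*c^7*e^5*(ι g) - 6*f0*f1^2*f2*c^4*e^8 - 2*f0*f1^3*c^5*e^7 - 3*f0^2*f3^2*c^10*e^2*(ι g)^2 - 6*f0^2*f2*f3*c^7*e^5*(ι g) - 3*f0^2*f2^2*c^4*e^8 - 6*f0^2*f1*f3*c^8*e^4*(ι g) - 6*f0^2*f1*f2*c^5*e^7 - 3*f0^2*f1^2*c^6*e^6 - 2*f0^3*f3*c^9*e^3*(ι g) - 2*f0^3*f2*c^6*e^6 - 2*f0^3*f1*c^7*e^5)*h2L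
  have hiQ2 : ι Q2 = (j0*c^2*e + j1*b*c^2 + j2*a^2*e + j3*a^2*b)^4 := by
    rw [hQ2def]
    simp only [map_add, map_mul, map_pow]
    simp only [hH0, hH1, hH2, hH3, ← ha, ← hb, ← hc, ← he]
    linear_combination (-2*j2*j3^3*a^8*b^3*e - 3*j2^2*j3^2*a^8*b^2*e^2 - 2*j2^3*j3*a^8*b*e^3 - 2*j1*j3^3*a^6*b^4*c^2 - 6*j1*j2*j3^2*a^6*b^3*c^2*e - 6*j1*j2^2*j3*a^6*b^2*c^2*e^2 - 2*j1*j2^3*a^6*b*c^2*e^3 - 3*j1^2*j3^2*a^4*b^4*c^4 - 6*j1^2*j2*j3*a^4*b^3*c^4*e - 3*j1^2*j2^2*a^4*b^2*c^4*e^2 - 2*j1^3*j3*a^2*b^4*c^6 - 2*j1^3*j2*a^2*b^3*c^6*e - 2*j0*j3^3*a^6*b^3*c^2*e - 6*j0*j2*j3^2*a^6*b^2*c^2*e^2 - 6*j0*j2^2*j3*a^6*b*c^2*e^3 - 2*j0*j2^3*a^6*c^2*e^4 - 6*j0*j1*j3^2*a^4*b^3*c^4*e - 12*j0*j1*j2*j3*a^4*b^2*c^4*e^2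 - 6*j0*j1*j2^2*a^4*b*c^4*e^3 - 6*j0*j1^2*j3*a^2*b^3*c^6*e - 6*j0*j1^2*j2*a^2*b^2*c^6*e^2 - 2*j0*j1^3*b^3*c^8*e - 3*j0^2*j3^2*a^4*b^2*c^4*e^2 - 6*j0^2*j2*j3*a^4*b*c^4*e^3 - 3*j0^2*j2^2*a^4*c^4*e^4 - 6*j0^2*j1*j3*a^2*b^2*c^6*e^2 - 6*j0^2*j1*j2*a^2*b*c^6*e^3 - 3*j0^2*j1^2*b^2*c^8*e^2 - 2*j0^3*j3*a^2*b*c^6*e^3 - 2*j0^3*j2*a^2*c^6*e^4 - 2*j0^3*j1*b*c^8*e^3)*h2L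
  have hiU3 : ι U3 = (f0*c^3 + f1*c^2*e + f2*c*e^2 + f3*e^3)^4 := by
    rw [hU3def]
    simp only [map_add, map_mul, map_pow]
    simp only [hF0, hF1, hF2, hF3, ← hc, ← he]
    linear_combination (-2*f2*f3^3*c*e^11 - 3*f2^2*f3^2*c^2*e^10 - 2*f2^3*f3*c^3*e^9 - 2*f1*f3^3*c^2*e^10 - 6*f1*f2*f3^2*c^3*e^9 - 6*f1*f2^2*f3*c^4*e^8 - 2*f1*f2^3*c^5*e^7 - 3*f1^2*f3^2*c^4*e^8 - 6*f1^2*f2*f3*c^5*e^7 - 3*f1^2*f2^2*c^6*e^6 - 2*f1^3*f3*c^6*e^6 - 2*f1^3*f2*c^7*e^5 - 2*f0*f3^3*c^3*e^9 - 6*f0*f2*f3^2*c^4*e^8 - 6*f0*f2^2*f3*c^5*e^7 - 2*f0*f2^3*c^6*e^6 - 6*f0*f1*f3^2*c^5*e^7 - 12*f0*f1*f2*f3*c^6*e^6 - 6*f0*f1*f2^2*c^7*e^5 - 6*f0*f1^2*f3*c^7*e^5 - 6*f0*f1^2*f2*c^8*e^4 - 2*f0*f1^3*c^9*e^3 - 3*f0^2*f3^2*c^6*e^6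 - 6*f0^2*f2*f3*c^7*e^5 - 3*f0^2*f2^2*c^8*e^4 - 6*f0^2*f1*f3*c^8*e^4 - 6*f0^2*f1*f2*c^9*e^3 - 3*f0^2*f1^2*c^10*e^2 - 2*f0^3*f3*c^9*e^3 - 2*f0^3*f2*c^10*e^2 - 2*f0^3*f1*c^11*e)*h2L
  have hiQ3 : ι Q3 = (j0*c^3 + j1*a*c^2 + j2*a^2*c + j3*a^3)^4 := by
    rw [hQ3def]
    simp only [map_add, map_mul, map_pow]
    simp only [hH0, hH1, hH2, hH3, ← ha, ← hb, ← hc, ← he]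
    linear_combination (-2*j2*j3^3*a^11*c - 3*j2^2*j3^2*a^10*c^2 - 2*j2^3*j3*a^9*c^3 - 2*j1*j3^3*a^10*c^2 - 6*j1*j2*j3^2*a^9*c^3 - 6*j1*j2^2*j3*a^8*c^4 - 2*j1*j2^3*a^7*c^5 - 3*j1^2*j3^2*a^8*c^4 - 6*j1^2*j2*j3*a^7*c^5 - 3*j1^2*j2^2*a^6*c^6 - 2*j1^3*j3*a^6*c^6 - 2*j1^3*j2*a^5*c^7 - 2*j0*j3^3*a^9*c^3 - 6*j0*j2*j3^2*a^8*c^4 - 6*j0*j2^2*j3*a^7*c^5 - 2*j0*j2^3*a^6*c^6 - 6*j0*j1*j3^2*a^7*c^5 - 12*j0*j1*j2*j3*a^6*c^6 - 6*j0*j1*j2^2*a^5*c^7 - 6*j0*j1^2*j3*a^5*c^7 - 6*j0*j1^2*j2*a^4*c^8 - 2*j0*j1^3*a^3*c^9 - 3*j0^2*j3^2*a^6*c^6 - 6*j0^2*j2*j3*a^5*c^7 - 3*j0^2*j2^2*a^4*c^8 - 6*j0^2*j1*j3*a^4*c^8 - 6*j0^2*j1*j2*a^3*c^9 - 3*j0^2*j1^2*a^2*c^10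 - 2*j0^3*j3*a^3*c^9 - 2*j0^3*j2*a^2*c^10 - 2*j0^3*j1*a*c^11)*h2L
  have Efold : ι f * (c^4 * ι g + e^4)^3 = ι U0 + ι U1 * ι g + ι U2 * (ι g)^2 + ι U3 * (ι g)^3 := by
    linear_combination ((c^4 * ι g + e^4)^3) * hfF - hiU0 - (ι g)*hiU1 - (ι g)^2*hiU2 - (ι g)^3*hiU3 + (f3^4*c^4*e^8*(ι g)^4 + f3^4*c^8*e^4*(ι g)^5 - 2*f2*f3^3*c*e^11*(ι g)^3 - 2*f2*f3^3*c^5*e^7*(ι g)^4 - 4*f2*f3^3*c^9*e^3*(ι g)^5 - 3*f2^2*f3^2*c^2*e^10*(ι g)^3 - 6*f2^2*f3^2*c^6*e^6*(ι g)^4 - 3*f2^2*f3^2*c^10*e^2*(ι g)^5 - 4*f2^3*f3*c^3*e^9*(ι g)^3 - 2*f2^3*f3*c^7*e^5*(ι g)^4 - 2*f2^3*f3*c^11*e*(ι g)^5 + f2^4*c^4*e^8*(ι g)^3 + f2^4*c^8*e^4*(ι g)^4 - 2*f1*f3^3*c^2*e^10*(ι g)^3 - 4*f1*f3^3*c^6*e^6*(ι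 g)^4 - 2*f1*f3^3*c^10*e^2*(ι g)^5 - 6*f1*f2*f3^2*c^3*e^9*(ι g)^3 - 18*f1*f2*f3^2*c^7*e^5*(ι g)^4 - 12*f1*f2^2*f3*c^4*e^8*(ι g)^3 - 12*f1*f2^2*f3*c^8*e^4*(ι g)^4 - 2*f1*f2^3*c*e^11*(ι g)^2 - 2*f1*f2^3*c^5*e^7*(ι g)^3 - 4*f1*f2^3*c^9*e^3*(ι g)^4 - 6*f1^2*f3^2*c^4*e^8*(ι g)^3 - 6*f1^2*f3^2*c^8*e^4*(ι g)^4 - 18*f1^2*f2*f3*c^5*e^7*(ι g)^3 - 6*f1^2*f2*f3*c^9*e^3*(ι g)^4 - 3*f1^2*f2^2*c^2*e^10*(ι g)^2 - 6*f1^2*f2^2*c^6*e^6*(ι g)^3 - 3*f1^2*f2^2*c^10*e^2*(ι g)^4 - 2*f1^3*f3*c^2*e^10*(ι g)^2 - 4*f1^3*f3*c^6*e^6*(ι g)^3 - 2*f1^3*f3*c^10*e^2*(ι g)^4 - 4*f1^3*f2*c^3*e^9*(ι g)^2 - 2*f1^3*f2*c^7*e^5*(ι g)^3 - 2*f1^3*f2*c^11*e*(ι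 g)^4 + f1^4*c^4*e^8*(ι g)^2 + f1^4*c^8*e^4*(ι g)^3 - 4*f0*f3^3*c^3*e^9*(ι g)^3 - 2*f0*f3^3*c^7*e^5*(ι g)^4 - 2*f0*f3^3*c^11*e*(ι g)^5 - 12*f0*f2*f3^2*c^4*e^8*(ι g)^3 - 12*f0*f2*f3^2*c^8*e^4*(ι g)^4 - 18*f0*f2^2*f3*c^5*e^7*(ι g)^3 - 6*f0*f2^2*f3*c^9*e^3*(ι g)^4 - 2*f0*f2^3*c^2*e^10*(ι g)^2 - 4*f0*f2^3*c^6*e^6*(ι g)^3 - 2*f0*f2^3*c^10*e^2*(ι g)^4 - 18*f0*f1*f3^2*c^5*e^7*(ι g)^3 - 6*f0*f1*f3^2*c^9*e^3*(ι g)^4 - 48*f0*f1*f2*f3*c^6*e^6*(ι g)^3 - 6*f0*f1*f2^2*c^3*e^9*(ι g)^2 - 18*f0*f1*f2^2*c^7*e^5*(ι g)^3 - 6*f0*f1^2*f3*c^3*e^9*(ι g)^2 - 18*f0*f1^2*f3*c^7*e^5*(ι g)^3 - 12*f0*f1^2*f2*c^4*e^8*(ι g)^2 - 12*f0*f1^2*f2*c^8*e^4*(ι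 g)^3 - 2*f0*f1^3*c*e^11*(ι g) - 2*f0*f1^3*c^5*e^7*(ι g)^2 - 4*f0*f1^3*c^9*e^3*(ι g)^3 - 3*f0^2*f3^2*c^2*e^10*(ι g)^2 - 6*f0^2*f3^2*c^6*e^6*(ι g)^3 - 3*f0^2*f3^2*c^10*e^2*(ι g)^4 - 6*f0^2*f2*f3*c^3*e^9*(ι g)^2 - 18*f0^2*f2*f3*c^7*e^5*(ι g)^3 - 6*f0^2*f2^2*c^4*e^8*(ι g)^2 - 6*f0^2*f2^2*c^8*e^4*(ι g)^3 - 12*f0^2*f1*f3*c^4*e^8*(ι g)^2 - 12*f0^2*f1*f3*c^8*e^4*(ι g)^3 - 18*f0^2*f1*f2*c^5*e^7*(ι g)^2 - 6*f0^2*f1*f2*c^9*e^3*(ι g)^3 - 3*f0^2*f1^2*c^2*e^10*(ι g) - 6*f0^2*f1^2*c^6*e^6*(ι g)^2 - 3*f0^2*f1^2*c^10*e^2*(ι g)^3 - 2*f0^3*f3*c*e^11*(ι g) - 2*f0^3*f3*c^5*e^7*(ι g)^2 - 4*f0^3*f3*c^9*e^3*(ι g)^3 - 2*f0^3*f2*c^2*e^10*(ι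 g) - 4*f0^3*f2*c^6*e^6*(ι g)^2 - 2*f0^3*f2*c^10*e^2*(ι g)^3 - 4*f0^3*f1*c^3*e^9*(ι g) - 2*f0^3*f1*c^7*e^5*(ι g)^2 - 2*f0^3*f1*c^11*e*(ι g)^3 + f0^4*c^4*e^8*(ι g) + f0^4*c^8*e^4*(ι g)^2)*h2L
  have Ehs : ι f * (c^4 * ι g + e^4)^3 = ι Q0 + ι Q1 * ι g + ι Q2 * (ι g)^2 + ι Q3 * (ι g)^3 := by
    linear_combination ((c^4 * ι g + e^4)^3) * hfH - hiQ0 - (ι g)*hiQ1 - (ι g)^2*hiQ2 - (ι g)^3*hiQ3 + ((j1^4*e^8 + 2*j1^4*c^4*e^4*(ι g) + j1^4*c^8*(ι g)^2) + (j2^4*e^8*(ι ((α*g+β)/(γ*g+δ))) + 2*j2^4*c^4*e^4*(ι g)*(ι ((α*g+β)/(γ*g+δ))) + j2^4*c^8*(ι g)^2*(ι ((α*g+β)/(γ*g+δ))) + j2^4*b^4*e^4 + j2^4*b^4*c^4*(ι g) + j2^4*a^4*e^4*(ι g) + j2^4*a^4*c^4*(ι g)^2) + (j3^4*e^8*(ι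 ((α*g+β)/(γ*g+δ)))^2 + 2*j3^4*c^4*e^4*(ι g)*(ι ((α*g+β)/(γ*g+δ)))^2 + j3^4*c^8*(ι g)^2*(ι ((α*g+β)/(γ*g+δ)))^2 + j3^4*b^4*e^4*(ι ((α*g+β)/(γ*g+δ))) + j3^4*b^4*c^4*(ι g)*(ι ((α*g+β)/(γ*g+δ))) + j3^4*b^8 + j3^4*a^4*e^4*(ι g)*(ι ((α*g+β)/(γ*g+δ))) + j3^4*a^4*c^4*(ι g)^2*(ι ((α*g+β)/(γ*g+δ))) + 2*j3^4*a^4*b^4*(ι g) + j3^4*a^8*(ι g)^2))*hrel + (j3^4*a^4*b^8*(ι g) + j3^4*a^8*b^4*(ι g)^2 - 2*j2*j3^3*b^11*e - 2*j2*j3^3*a^3*b^8*c*(ι g) - 2*j2*j3^3*a^8*b^3*e*(ι g)^2 - 2*j2*j3^3*a^11*c*(ι g)^3 - 3*j2^2*j3^2*b^10*e^2 - 3*j2^2*j3^2*a^2*b^8*c^2*(ι g) - 3*j2^2*j3^2*a^8*b^2*e^2*(ι g)^2 - 3*j2^2*j3^2*a^10*c^2*(ι g)^3 - 2*j2^3*j3*b^9*e^3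 - 2*j2^3*j3*a*b^8*c^3*(ι g) - 2*j2^3*j3*a^8*b*e^3*(ι g)^2 - 2*j2^3*j3*a^9*c^3*(ι g)^3 + j2^4*a^4*b^4*e^4*(ι g) + j2^4*a^4*b^4*c^4*(ι g)^2 - 2*j1*j3^3*b^10*e^2 - 2*j1*j3^3*a^4*b^6*e^2*(ι g) - 2*j1*j3^3*a^6*b^4*c^2*(ι g)^2 - 2*j1*j3^3*a^10*c^2*(ι g)^3 - 6*j1*j2*j3^2*b^9*e^3 - 6*j1*j2*j3^2*a^3*b^6*c*e^2*(ι g) - 6*j1*j2*j3^2*a^6*b^3*c^2*e*(ι g)^2 - 6*j1*j2*j3^2*a^9*c^3*(ι g)^3 - 6*j1*j2^2*j3*b^8*e^4 - 6*j1*j2^2*j3*a^2*b^6*c^2*e^2*(ι g) - 6*j1*j2^2*j3*a^6*b^2*c^2*e^2*(ι g)^2 - 6*j1*j2^2*j3*a^8*c^4*(ι g)^3 - 2*j1*j2^3*b^7*e^5 - 2*j1*j2^3*a*b^6*c^3*e^2*(ι g) - 2*j1*j2^3*a^6*b*c^2*e^3*(ι g)^2 - 2*j1*j2^3*a^7*c^5*(ι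 g)^3 - 3*j1^2*j3^2*b^8*e^4 - 3*j1^2*j3^2*a^4*b^4*e^4*(ι g) - 3*j1^2*j3^2*a^4*b^4*c^4*(ι g)^2 - 3*j1^2*j3^2*a^8*c^4*(ι g)^3 - 6*j1^2*j2*j3*b^7*e^5 - 6*j1^2*j2*j3*a^3*b^4*c*e^4*(ι g) - 6*j1^2*j2*j3*a^4*b^3*c^4*e*(ι g)^2 - 6*j1^2*j2*j3*a^7*c^5*(ι g)^3 - 3*j1^2*j2^2*b^6*e^6 - 3*j1^2*j2^2*a^2*b^4*c^2*e^4*(ι g) - 3*j1^2*j2^2*a^4*b^2*c^4*e^2*(ι g)^2 - 3*j1^2*j2^2*a^6*c^6*(ι g)^3 - 2*j1^3*j3*b^6*e^6 - 2*j1^3*j3*a^2*b^4*c^6*(ι g)^2 - 2*j1^3*j3*a^4*b^2*e^6*(ι g) - 2*j1^3*j3*a^6*c^6*(ι g)^3 - 2*j1^3*j2*b^5*e^7 - 2*j1^3*j2*a^2*b^3*c^6*e*(ι g)^2 - 2*j1^3*j2*a^3*b^2*c*e^6*(ι g) - 2*j1^3*j2*a^5*c^7*(ι g)^3 + j1^4*b^4*c^4*e^4*(ι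 g) + j1^4*a^4*c^4*e^4*(ι g)^2 - 2*j0*j3^3*b^9*e^3 - 2*j0*j3^3*a^3*b^6*c*e^2*(ι g) - 2*j0*j3^3*a^6*b^3*c^2*e*(ι g)^2 - 2*j0*j3^3*a^9*c^3*(ι g)^3 - 6*j0*j2*j3^2*b^8*e^4 - 6*j0*j2*j3^2*a^2*b^6*c^2*e^2*(ι g) - 6*j0*j2*j3^2*a^6*b^2*c^2*e^2*(ι g)^2 - 6*j0*j2*j3^2*a^8*c^4*(ι g)^3 - 6*j0*j2^2*j3*b^7*e^5 - 6*j0*j2^2*j3*a*b^6*c^3*e^2*(ι g) - 6*j0*j2^2*j3*a^6*b*c^2*e^3*(ι g)^2 - 6*j0*j2^2*j3*a^7*c^5*(ι g)^3 - 2*j0*j2^3*b^6*e^6 - 2*j0*j2^3*b^6*c^4*e^2*(ι g) - 2*j0*j2^3*a^6*c^2*e^4*(ι g)^2 - 2*j0*j2^3*a^6*c^6*(ι g)^3 - 6*j0*j1*j3^2*b^7*e^5 - 6*j0*j1*j3^2*a^3*b^4*c*e^4*(ι g) - 6*j0*j1*j3^2*a^4*b^3*c^4*e*(ι g)^2 -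 6*j0*j1*j3^2*a^7*c^5*(ι g)^3 - 12*j0*j1*j2*j3*b^6*e^6 - 12*j0*j1*j2*j3*a^2*b^4*c^2*e^4*(ι g) - 12*j0*j1*j2*j3*a^4*b^2*c^4*e^2*(ι g)^2 - 12*j0*j1*j2*j3*a^6*c^6*(ι g)^3 - 6*j0*j1*j2^2*b^5*e^7 - 6*j0*j1*j2^2*a*b^4*c^3*e^4*(ι g) - 6*j0*j1*j2^2*a^4*b*c^4*e^3*(ι g)^2 - 6*j0*j1*j2^2*a^5*c^7*(ι g)^3 - 6*j0*j1^2*j3*b^5*e^7 - 6*j0*j1^2*j3*a^2*b^3*c^6*e*(ι g)^2 - 6*j0*j1^2*j3*a^3*b^2*c*e^6*(ι g) - 6*j0*j1^2*j3*a^5*c^7*(ι g)^3 - 6*j0*j1^2*j2*b^4*e^8 - 6*j0*j1^2*j2*a^2*b^2*c^2*e^6*(ι g) - 6*j0*j1^2*j2*a^2*b^2*c^6*e^2*(ι g)^2 - 6*j0*j1^2*j2*a^4*c^8*(ι g)^3 - 2*j0*j1^3*b^3*e^9 - 2*j0*j1^3*b^3*c^8*e*(ι g)^2 - 2*j0*j1^3*a^3*c*e^8*(ι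 g) - 2*j0*j1^3*a^3*c^9*(ι g)^3 - 3*j0^2*j3^2*b^6*e^6 - 3*j0^2*j3^2*a^2*b^4*c^2*e^4*(ι g) - 3*j0^2*j3^2*a^4*b^2*c^4*e^2*(ι g)^2 - 3*j0^2*j3^2*a^6*c^6*(ι g)^3 - 6*j0^2*j2*j3*b^5*e^7 - 6*j0^2*j2*j3*a*b^4*c^3*e^4*(ι g) - 6*j0^2*j2*j3*a^4*b*c^4*e^3*(ι g)^2 - 6*j0^2*j2*j3*a^5*c^7*(ι g)^3 - 3*j0^2*j2^2*b^4*e^8 - 3*j0^2*j2^2*b^4*c^4*e^4*(ι g) - 3*j0^2*j2^2*a^4*c^4*e^4*(ι g)^2 - 3*j0^2*j2^2*a^4*c^8*(ι g)^3 - 6*j0^2*j1*j3*b^4*e^8 - 6*j0^2*j1*j3*a^2*b^2*c^2*e^6*(ι g) - 6*j0^2*j1*j3*a^2*b^2*c^6*e^2*(ι g)^2 - 6*j0^2*j1*j3*a^4*c^8*(ι g)^3 - 6*j0^2*j1*j2*b^3*e^9 - 6*j0^2*j1*j2*a*b^2*c^3*e^6*(ι g) - 6*j0^2*j1*j2*a^2*b*c^6*e^3*(ι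 g)^2 - 6*j0^2*j1*j2*a^3*c^9*(ι g)^3 - 3*j0^2*j1^2*b^2*e^10 - 3*j0^2*j1^2*b^2*c^8*e^2*(ι g)^2 - 3*j0^2*j1^2*a^2*c^2*e^8*(ι g) - 3*j0^2*j1^2*a^2*c^10*(ι g)^3 - 2*j0^3*j3*b^3*e^9 - 2*j0^3*j3*a*b^2*c^3*e^6*(ι g) - 2*j0^3*j3*a^2*b*c^6*e^3*(ι g)^2 - 2*j0^3*j3*a^3*c^9*(ι g)^3 - 2*j0^3*j2*b^2*e^10 - 2*j0^3*j2*b^2*c^4*e^6*(ι g) - 2*j0^3*j2*a^2*c^6*e^4*(ι g)^2 - 2*j0^3*j2*a^2*c^10*(ι g)^3 - 2*j0^3*j1*b*e^11 - 2*j0^3*j1*b*c^8*e^3*(ι g)^2 - 2*j0^3*j1*a*c^3*e^8*(ι g) - 2*j0^3*j1*a*c^11*(ι g)^3 + j0^4*c^4*e^8*(ι g) + j0^4*c^8*e^4*(ι g)^2)*h2L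
  have hmatchL : ι ((U0-Q0) + (U1-Q1)*g + (U2-Q2)*g^2 + (U3-Q3)*g^3) = 0 := by
    simp only [map_add, map_sub, map_mul, map_pow]
    linear_combination Ehs - Efold
  have hmatchK : (U0-Q0) + (U1-Q1)*g + (U2-Q2)*g^2 + (U3-Q3)*g^3 = 0 :=
    hinj (by rw [hmatchL, map_zero])
  obtain ⟨z0, z1, z2, z3⟩ := SY_indep4g h2K hfg htr hdeg hg (sub_mem hU0m hQ0m)
    (sub_mem hU1m hQ1m) (sub_mem hU2m hQ2m) (sub_mem hU3m hQ3m) hmatchK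
  have E0' : f0*e^3 + ι g*(f1*c^3 + f2*c^2*e + f3*c*e^2) = j0*e^3 + j1*b*e^2 + j2*b^2*e + j3*b^3 := by
    apply SY_pow4_inj h2L
    rw [← hiU0, ← hiQ0]
    exact congrArg ι (sub_eq_zero.mp z0)
  have E1' : f0*c*e^2 + f1*e^3 + ι g*(f2*c^3 + f3*c^2*e) = j0*c*e^2 + j1*a*e^2 + j2*b^2*c + j3*a*b^2 := by
    apply SY_pow4_inj h2L
    rw [← hiU1, ← hiQ1]
    exact congrArg ι (sub_eq_zero.mp z1)
  have E2' : f0*c^2*e + f1*c*e^2 + f2*e^3 + ι g*(f3*c^3) = j0*c^2*e + j1*b*c^2 + j2*a^2*e + j3*a^2*b := by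
    apply SY_pow4_inj h2L
    rw [← hiU2, ← hiQ2]
    exact congrArg ι (sub_eq_zero.mp z2)
  have E3' : f0*c^3 + f1*c^2*e + f2*c*e^2 + f3*e^3 = j0*c^3 + j1*a*c^2 + j2*a^2*c + j3*a^3 := by
    apply SY_pow4_inj h2L
    rw [← hiU3, ← hiQ3]
    exact congrArg ι (sub_eq_zero.mp z3)
  have κ := SY_calc h2L f0 f1 f2 f3 j0 j1 j2 j3 a b c e (ι g) (ι ((α*g+β)/(γ*g+δ)))
    hrel hDel hDf hDj E0' E1' E2' E3'
  have sEqL : ι (s * (γ*g+δ)^2) = ι (s' * (α*δ+β*γ)) := by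
    rw [map_mul, map_mul, map_pow, hmapden, hs, hs', ← hdet4]
    exact κ
  have sEq : s * (γ*g+δ)^2 = s' * (α*δ+β*γ) := hinj sEqL
  have hDγ : KaehlerDifferential.D k K γ = 0 := SY_D_eq_zero h2K (SY_kFour_le_kSq hγ)
  have hDδ : KaehlerDifferential.D k K δ = 0 := SY_D_eq_zero h2K (SY_kFour_le_kSq hδ)
  have hDα : KaehlerDifferential.D k K α = 0 := SY_D_eq_zero h2K (SY_kFour_le_kSq hα)
  have hDβ : KaehlerDifferential.D k K β = 0 := SY_D_eq_zero h2K (SY_kFour_le_kSq hβ)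
  have hgp : (α*g+β)/(γ*g+δ) * (γ*g+δ) = α*g+β := div_mul_cancel₀ _ hden
  have hd1 : KaehlerDifferential.D k K (γ*g+δ) = γ • KaehlerDifferential.D k K g := by
    rw [map_add, hDδ, add_zero, Derivation.leibniz, hDγ, smul_zero, add_zero]
  have hd2 : KaehlerDifferential.D k K (α*g+β) = α • KaehlerDifferential.D k K g := by
    rw [map_add, hDβ, add_zero, Derivation.leibniz, hDα, smul_zero, add_zero]
  have hd3 : ((α*g+β)/(γ*g+δ)) • KaehlerDifferential.D k K (γ*g+δ)
      + (γ*g+δ) • KaehlerDifferential.D k K ((α*g+β)/(γ*g+δ))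
      = α • KaehlerDifferential.D k K g := by
    rw [← Derivation.leibniz, hgp, hd2]
  have hd4 : (γ*g+δ) • KaehlerDifferential.D k K ((α*g+β)/(γ*g+δ))
      = (α - ((α*g+β)/(γ*g+δ))*γ) • KaehlerDifferential.D k K g := by
    rw [hd1, smul_smul] at hd3
    rw [sub_smul]
    exact eq_sub_of_add_eq' hd3
  have e5 : (γ*g+δ)*(α - ((α*g+β)/(γ*g+δ))*γ) = α*δ+β*γ := by
    linear_combination (-γ)*hgp + (-(β*γ))*h2K
  have hd5 : ((γ*g+δ)^2) • KaehlerDifferential.D k K ((α*g+β)/(γ*g+δ))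
      = (α*δ+β*γ) • KaehlerDifferential.D k K g := by
    rw [pow_two, mul_smul, hd4, smul_smul, e5]
  have final : ((γ*g+δ)^2) • (s' • KaehlerDifferential.D k K ((α*g+β)/(γ*g+δ)))
      = ((γ*g+δ)^2) • (s • KaehlerDifferential.D k K g) := by
    rw [smul_comm ((γ*g+δ)^2) s', hd5, smul_smul, smul_smul, ← sEq]
    congr 1
    ring
  exact (smul_right_injective _ (pow_ne_zero 2 hden) final).symm
end
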